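/- arXiv:1510.08234 — 6 statements merged into one kernel-verified Lean document; each statement's English description precedes it below -/
import Mathlib

section
/- Complexity of descent sequences for convex KL functions via the one-dimensional worst-case proximal sequence: let r̄ > 0 and φ ∈ 𝒦(0,r̄), and assume f satisfies the KL inequality φ′(f(x))·‖∂⁰f(x)‖ ≥ 1 for every x with 0 < f(x) < r̄. Let (x_k)_{k≥0} be a subgradient descent sequence for f with constants a, b > 0 and f(x₀) = r₀ ∈ (0,r̄). Set α₀ = φ(r₀) and let ψ = (φ|_{[0,r₀]})^{−1} : [0,α₀] → [0,r₀]; assume (A): ψ′ is Lipschitz continuous on [0,α₀] with constant ℓ > 0 and ψ′(0) = 0. Set ζ = (√(1 + 2ℓ a b^{−2}) − 1)/ℓ, and for k ≥ 0 let α_{k+1} be the unique minimizer over u ∈ [0,α₀] of u ↦ ψ(u) + (u − α_k)²/(2ζ). Then (x_k) converges strongly to some x* ∈ argmin f, f(x_k) ≤ ψ(α_k) for all k ≥ 0, and ‖x_k − x*‖ ≤ (b/a)·α_k + √(ψ(α_{k−1})/a) for all k ≥ 1. (Theorem 4.4.) -/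
open Metric Set Filter
open scoped RealInnerProductSpace

noncomputable section

variable {H : Type*} [NormedAddCommGroup H] [InnerProductSpace ℝ H] [CompleteSpace H]

open scoped Topology

section AuxLemmas

/-- Descent lemma: Taylor bound with Lipschitz derivative, on `Icc 0 A`. -/
theorem my_descent (ψ ψ' : ℝ → ℝ) (A ℓ : ℝ) (hA : 0 < A)
    (hderiv : ∀ u ∈ Icc (0:ℝ) A, HasDerivWithinAt ψ (ψ' u) (Icc 0 A) u)
    (hlip : ∀ u ∈ Icc (0:ℝ) A, ∀ v ∈ Icc (0:ℝ) A, |ψ' u - ψ' v| ≤ ℓ * |u - v|)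
    (hl : 0 ≤ ℓ) (u v : ℝ) (hu : u ∈ Icc (0:ℝ) A) (hv : v ∈ Icc (0:ℝ) A) :
    ψ v ≤ ψ u + ψ' u * (v - u) + ℓ / 2 * (v - u) ^ 2 := by
  rcases eq_or_ne v u with rfl | hne
  · simp
  set w := v - u with hw
  clear_value w
  have hwne : w ≠ 0 := by rw [hw]; exact sub_ne_zero.2 hne
  have hψcont : ContinuousOn ψ (Icc 0 A) := fun z hz => (hderiv z hz).continuousWithinAt
  -- the auxiliary function
  set g : ℝ → ℝ := fun t => ψ (u + t * w) - t * (ψ' u * w) - ℓ / 2 * t ^ 2 * w ^ 2 with hg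
  have hmem : ∀ t ∈ Icc (0:ℝ) 1, u + t * w ∈ Icc (0:ℝ) A := by
    intro t ht
    constructor
    · rcases le_or_gt 0 w with h | h
      · nlinarith [hu.1, ht.1]
      · nlinarith [hv.1, ht.2]
    · rcases le_or_gt 0 w with h | h
      · nlinarith [hv.2, ht.2]
      · nlinarith [hu.2, ht.1]
  have hmem' : ∀ t ∈ Ioo (0:ℝ) 1, u + t * w ∈ Ioo (0:ℝ) A := by
    intro t ht
    rcases lt_or_gt_of_ne hwne with h | h
    · constructor
      · have : u + t * w > u + 1 * w := by nlinarith [ht.2]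
        have hv1 := hv.1; nlinarith
      · have : u + t * w < u + 0 * w := by nlinarith [ht.1]
        have := hu.2; nlinarith
    · constructor
      · have : u + t * w > u + 0 * w := by nlinarith [ht.1]
        have := hu.1; nlinarith
      · have : u + t * w < u + 1 * w := by nlinarith [ht.2]
        have := hv.2; nlinarith
  have hgd : ∀ t ∈ Ioo (0:ℝ) 1, HasDerivAt g
      (ψ' (u + t * w) * w - ψ' u * w - ℓ / 2 * (2 * t) * w ^ 2) t := by
    intro t ht
    have hin : HasDerivAt (fun t : ℝ => u + t * w) w t := by
      simpa using ((hasDerivAt_id t).mul_const w).const_add u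
    have h1 : HasDerivAt ψ (ψ' (u + t * w)) (u + t * w) := by
      refine (hderiv _ (hmem t ⟨ht.1.le, ht.2.le⟩)).hasDerivAt ?_
      exact Icc_mem_nhds (hmem' t ht).1 (lt_of_lt_of_le (hmem' t ht).2 le_rfl)
    have hcomp : HasDerivAt (fun t : ℝ => ψ (u + t * w)) (ψ' (u + t * w) * w) t :=
      HasDerivAt.comp t h1 hin
    have h2 : HasDerivAt (fun t : ℝ => t * (ψ' u * w)) (ψ' u * w) t := by
      simpa using (hasDerivAt_id t).mul_const (ψ' u * w)
    have h3 : HasDerivAt (fun t : ℝ => ℓ / 2 * t ^ 2 * w ^ 2) (ℓ / 2 * (2 * t) * w ^ 2) t := by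
      have := (hasDerivAt_pow 2 t).const_mul (ℓ / 2)
      have := this.mul_const (w ^ 2)
      refine this.congr_deriv ?_
      norm_num
    exact (hcomp.sub h2).sub h3
  have hanti : AntitoneOn g (Icc 0 1) := by
    apply antitoneOn_of_deriv_nonpos (convex_Icc 0 1)
    · apply ContinuousOn.sub
      apply ContinuousOn.sub
      · exact hψcont.comp (by fun_prop) hmem
      · fun_prop
      · fun_prop
    · intro t ht
      rw [interior_Icc] at ht
      exact ((hgd t ht).differentiableAt).differentiableWithinAt
    · intro t ht
      rw [interior_Icc] at ht
      rw [(hgd t ht).deriv]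
      have hb := hlip _ (hmem t ⟨ht.1.le, ht.2.le⟩) u hu
      have h1 : (ψ' (u + t * w) - ψ' u) * w ≤ ℓ * (t * |w|) * |w| := by
        calc (ψ' (u + t * w) - ψ' u) * w ≤ |(ψ' (u + t * w) - ψ' u) * w| := le_abs_self _
        _ = |ψ' (u + t * w) - ψ' u| * |w| := abs_mul _ _
        _ ≤ (ℓ * |u + t * w - u|) * |w| := by
            apply mul_le_mul_of_nonneg_right _ (abs_nonneg w)
            simpa using hb
        _ = ℓ * (t * |w|) * |w| := by
            rw [add_sub_cancel_left, abs_mul, abs_of_nonneg ht.1.le]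
      have h2 : ℓ * (t * |w|) * |w| = ℓ * t * w ^ 2 := by
        calc ℓ * (t * |w|) * |w| = ℓ * t * (|w| * |w|) := by ring
        _ = ℓ * t * (w * w) := by rw [abs_mul_abs_self]
        _ = ℓ * t * w ^ 2 := by ring
      nlinarith [h1, h2]
  have := hanti (by norm_num : (0:ℝ) ∈ Icc (0:ℝ) 1) (by norm_num : (1:ℝ) ∈ Icc (0:ℝ) 1) zero_le_one
  simp only [hg] at this
  norm_num at this
  rw [show u + w = v by rw [hw]; ring] at this
  linarith [this]


theorem my_conc_deriv_anti (φ φ' : ℝ → ℝ) (R : ℝ)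
    (hconc : ConcaveOn ℝ (Ico 0 R) φ)
    (hderiv : ∀ s ∈ Ioo (0:ℝ) R, HasDerivAt φ (φ' s) s)
    {s t : ℝ} (hs : s ∈ Ioo (0:ℝ) R) (ht : t ∈ Ioo (0:ℝ) R) (hst : s ≤ t) :
    φ' t ≤ φ' s := by
  rcases eq_or_lt_of_le hst with rfl | hlt
  · exact le_refl _
  have hconv : ConvexOn ℝ (Ico 0 R) (-φ) := hconc.neg
  have hsI : s ∈ Ico (0:ℝ) R := ⟨hs.1.le, hs.2⟩
  have htI : t ∈ Ico (0:ℝ) R := ⟨le_trans hs.1.le hst, ht.2⟩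
  have hnb : (𝓝[Ioo s t] s).NeBot := by
    rw [← mem_closure_iff_nhdsWithin_neBot, closure_Ioo hlt.ne]
    exact ⟨le_refl s, hlt.le⟩
  have hnb' : (𝓝[Ioo s t] t).NeBot := by
    rw [← mem_closure_iff_nhdsWithin_neBot, closure_Ioo hlt.ne]
    exact ⟨hlt.le, le_refl t⟩
  have hsub : Ioo s t ⊆ {s}ᶜ := fun y hy => ne_of_gt hy.1
  have hsub' : Ioo s t ⊆ {t}ᶜ := fun y hy => ne_of_lt hy.2
  have claim1 : (φ t - φ s) / (t - s) ≤ φ' s := by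
    have htd : Tendsto (slope φ s) (𝓝[Ioo s t] s) (𝓝 (φ' s)) :=
      (hasDerivAt_iff_tendsto_slope.1 (hderiv s hs)).mono_left
        (nhdsWithin_mono s hsub)
    refine ge_of_tendsto htd ?_
    filter_upwards [self_mem_nhdsWithin] with y hy
    have hyI : y ∈ Ico (0:ℝ) R := ⟨le_trans hs.1.le hy.1.le, lt_trans hy.2 ht.2⟩
    have h := hconv.secant_mono hsI hyI htI (ne_of_gt hy.1) (ne_of_gt hlt) hy.2.le
    simp only [Pi.neg_apply] at h
    rw [show -φ y - -φ s = -(φ y - φ s) by ring, show -φ t - -φ s = -(φ t - φ s) by ring,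
      neg_div, neg_div, neg_le_neg_iff] at h
    rw [slope_def_field]
    exact h
  have claim2 : φ' t ≤ (φ t - φ s) / (t - s) := by
    have htd : Tendsto (slope φ t) (𝓝[Ioo s t] t) (𝓝 (φ' t)) :=
      (hasDerivAt_iff_tendsto_slope.1 (hderiv t ht)).mono_left
        (nhdsWithin_mono t hsub')
    refine le_of_tendsto htd ?_
    filter_upwards [self_mem_nhdsWithin] with y hy
    have hyI : y ∈ Ico (0:ℝ) R := ⟨le_trans hs.1.le hy.1.le, lt_trans hy.2 ht.2⟩
    have h := hconv.secant_mono htI hsI hyI (ne_of_lt hlt) (ne_of_lt hy.2) hy.1.le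
    simp only [Pi.neg_apply] at h
    rw [show -φ s - -φ t = φ t - φ s by ring, show -φ y - -φ t = φ t - φ y by ring,
      show s - t = -(t - s) by ring, show y - t = -(t - y) by ring,
      div_neg, div_neg, neg_le_neg_iff] at h
    rw [slope_def_field, show φ y - φ t = -(φ t - φ y) by ring,
      show y - t = -(t - y) by ring, neg_div_neg_eq]
    exact h
  linarith

end AuxLemmas

/-- The convex subdifferential of an extended-real-valued function:
`∂f(x) = {u : f(y) ≥ f(x) + ⟨u, y - x⟩ for all y}`. -/
def subdiff (f : H → EReal) (x : H) : Set H :=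
  {u | ∀ y : H, f x + ((⟪u, y - x⟫ : ℝ) : EReal) ≤ f y}

/-- The set of global minimizers of `f`. -/
def argminSet (f : H → EReal) : Set H := {x | ∀ y, f x ≤ f y}

set_option maxHeartbeats 1600000 in
/-- **Theorem 4.4** (complexity of descent sequences for convex KL functions via
the one-dimensional worst-case proximal sequence): `f` proper lsc convex with
`min f = 0` and KL on `[0 < f < r̄]` with `φ ∈ 𝒦(0,r̄)`; `(x_k)` a subgradient
descent sequence with constants `a, b > 0` and `f(x₀) = r₀ ∈ (0,r̄)`;
`α₀ = φ(r₀)`, `ψ = (φ|_{[0,r₀]})⁻¹ : [0,α₀] → [0,r₀]`; assumption (A): `ψ'` is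
`ℓ`-Lipschitz on `[0,α₀]` with `ψ'(0) = 0`; `ζ = (√(1+2ℓab⁻²) − 1)/ℓ`; and
`α_{k+1}` minimizes `u ↦ ψ(u) + (u − α_k)²/(2ζ)` over `[0,α₀]`.  Then `x_k`
converges strongly to some `x* ∈ argmin f`, `f(x_k) ≤ ψ(α_k)` for all `k ≥ 0`,
and `‖x_k − x*‖ ≤ (b/a)α_k + √(ψ(α_{k−1})/a)` for all `k ≥ 1` (the latter is
stated with the index shift `k ↦ k+1`). -/
theorem stmt10 (f : H → EReal)
    (hbot : ∀ x, f x ≠ ⊥) (htop : ∃ x, f x ≠ ⊤)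
    (hlsc : LowerSemicontinuous f)
    (hconv : ∀ x y : H, ∀ t : ℝ, 0 < t → t < 1 →
      f (t • x + (1 - t) • y) ≤ (t : EReal) * f x + ((1 - t : ℝ) : EReal) * f y)
    (hmin : ∃ z, z ∈ argminSet f ∧ f z = 0)
    (rbar : ℝ) (hrbar : 0 < rbar)
    (φ φ' : ℝ → ℝ)
    (hφcont : ContinuousOn φ (Ico 0 rbar))
    (hφderiv : ∀ s ∈ Ioo (0 : ℝ) rbar, HasDerivAt φ (φ' s) s)
    (hφ'cont : ContinuousOn φ' (Ioo 0 rbar))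
    (hφconc : ConcaveOn ℝ (Ico 0 rbar) φ)
    (hφ0 : φ 0 = 0)
    (hφ'pos : ∀ s ∈ Ioo (0 : ℝ) rbar, 0 < φ' s)
    (hKL : ∀ x, 0 < f x → f x < (rbar : EReal) →
      ∀ u ∈ subdiff f x, 1 ≤ φ' ((f x).toReal) * ‖u‖)
    (a b : ℝ) (ha : 0 < a) (hb : 0 < b)
    (x : ℕ → H)
    (hH1 : ∀ k : ℕ, f (x (k + 1)) + ((a * ‖x (k + 1) - x k‖ ^ 2 : ℝ) : EReal) ≤ f (x k))
    (hH2 : ∀ k : ℕ, ∃ ω ∈ subdiff f (x (k + 1)), ‖ω‖ ≤ b * ‖x (k + 1) - x k‖)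
    (r0 : ℝ) (hr0pos : 0 < r0) (hr0 : r0 < rbar) (hfx0 : f (x 0) = (r0 : EReal))
    -- `ψ` is the inverse of `φ` restricted to `[0,r₀]`, mapping `[0,α₀]` to `[0,r₀]`
    (ψ : ℝ → ℝ)
    (hψφ : ∀ s ∈ Icc 0 r0, ψ (φ s) = s)
    (hφψ : ∀ u ∈ Icc 0 (φ r0), φ (ψ u) = u)
    (hψmem : ∀ u ∈ Icc 0 (φ r0), ψ u ∈ Icc 0 r0)
    -- assumption (A)
    (ψ' : ℝ → ℝ) (ℓ : ℝ) (hℓ : 0 < ℓ)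
    (hψderiv : ∀ u ∈ Icc 0 (φ r0), HasDerivWithinAt ψ (ψ' u) (Icc 0 (φ r0)) u)
    (hψ'lip : ∀ u ∈ Icc 0 (φ r0), ∀ v ∈ Icc 0 (φ r0), |ψ' u - ψ' v| ≤ ℓ * |u - v|)
    (hψ'0 : ψ' 0 = 0)
    -- the one-dimensional worst-case proximal sequence
    (ζ : ℝ) (hζ : ζ = (Real.sqrt (1 + 2 * ℓ * a / b ^ 2) - 1) / ℓ)
    (α : ℕ → ℝ) (hα0 : α 0 = φ r0)
    (hαmem : ∀ k : ℕ, α (k + 1) ∈ Icc 0 (φ r0))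
    (hαmin : ∀ k : ℕ, ∀ u ∈ Icc 0 (φ r0),
      ψ (α (k + 1)) + (α (k + 1) - α k) ^ 2 / (2 * ζ)
        ≤ ψ u + (u - α k) ^ 2 / (2 * ζ)) :
    ∃ xstar ∈ argminSet f, Tendsto x atTop (nhds xstar) ∧
      (∀ k : ℕ, f (x k) ≤ ((ψ (α k) : ℝ) : EReal)) ∧
      ∀ k : ℕ, ‖x (k + 1) - xstar‖ ≤
        (b / a) * α (k + 1) + Real.sqrt (ψ (α k) / a) := by
  
  
  classical
  set A := φ r0 with hAdef
  set d : ℕ → ℝ := fun k => ‖x (k + 1) - x k‖ with hddef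
  have hdnn : ∀ k, 0 ≤ d k := fun k => norm_nonneg _
  -- f is nonnegative
  have hfge : ∀ y, (0 : EReal) ≤ f y := by
    obtain ⟨z, hz, hz0⟩ := hmin
    intro y; rw [← hz0]; exact hz y
  -- the values r k
  set r : ℕ → ℝ := fun k => (f (x k)).toReal with hrdef
  have hfin : ∀ k, f (x k) = ((r k : ℝ) : EReal) := by
    intro k
    induction k with
    | zero => simp only [hrdef, hfx0, EReal.toReal_coe]
    | succ k ih =>
      have hc : (0 : EReal) ≤ ((a * ‖x (k + 1) - x k‖ ^ 2 : ℝ) : EReal) := by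
        rw [EReal.coe_nonneg]; positivity
      have h1 : f (x (k + 1)) ≤ f (x k) :=
        le_trans (le_add_of_nonneg_right hc) (hH1 k)
      rw [ih] at h1
      have hne : f (x (k + 1)) ≠ ⊤ := ne_top_of_le_ne_top (EReal.coe_ne_top _) h1
      exact (EReal.coe_toReal hne (hbot _)).symm
  have hrnn : ∀ k, 0 ≤ r k := by
    intro k
    have := hfge (x k); rw [hfin k] at this
    exact EReal.coe_nonneg.1 this
  have hstep : ∀ k, r (k + 1) + a * d k ^ 2 ≤ r k := by
    intro k
    have := hH1 k
    rw [hfin k, hfin (k + 1)] at this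
    have h2 : ((r (k + 1) + a * d k ^ 2 : ℝ) : EReal) ≤ ((r k : ℝ) : EReal) := by
      rw [EReal.coe_add]; exact this
    exact EReal.coe_le_coe_iff.1 h2
  have hrdec : ∀ k, r (k + 1) ≤ r k := by
    intro k
    have h := hstep k
    nlinarith [mul_nonneg ha.le (sq_nonneg (d k))]
  have hr00 : r 0 = r0 := by
    have h := hfin 0; rw [hfx0] at h
    exact le_antisymm (EReal.coe_le_coe_iff.1 h.ge) (EReal.coe_le_coe_iff.1 h.le)
  have hrler0 : ∀ k, r k ≤ r0 := by
    intro k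
    induction k with
    | zero => exact hr00.le
    | succ k ih => exact le_trans (hrdec k) ih
  have hrmem : ∀ k, r k ∈ Icc (0:ℝ) r0 := fun k => ⟨hrnn k, hrler0 k⟩
  -- monotonicity of φ
  have hφmono : StrictMonoOn φ (Ico 0 rbar) := by
    apply strictMonoOn_of_deriv_pos (convex_Ico 0 rbar) hφcont
    intro s hs
    rw [interior_Ico] at hs
    rw [(hφderiv s hs).deriv]
    exact hφ'pos s hs
  have hφmono' : MonotoneOn φ (Ico 0 rbar) := hφmono.monotoneOn
  have hIccsub : Icc (0:ℝ) r0 ⊆ Ico 0 rbar := fun t ht => ⟨ht.1, lt_of_le_of_lt ht.2 hr0⟩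
  have hA : 0 < A := by
    have := hφmono (show (0:ℝ) ∈ Ico 0 rbar from ⟨le_rfl, hrbar⟩)
      (hIccsub ⟨hr0pos.le, le_rfl⟩) hr0pos
    rwa [hφ0] at this
  have hφmaps : MapsTo φ (Icc 0 r0) (Icc 0 A) := by
    intro t ht
    constructor
    · rw [← hφ0]
      exact hφmono' ⟨le_rfl, hrbar⟩ (hIccsub ht) ht.1
    · exact hφmono' (hIccsub ht) (hIccsub ⟨hr0pos.le, le_rfl⟩) ht.2
  -- monotonicity of ψ
  have hψmono : ∀ u ∈ Icc (0:ℝ) A, ∀ v ∈ Icc (0:ℝ) A, u ≤ v → ψ u ≤ ψ v := by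
    intro u hu v hv huv
    by_contra hcon
    push_neg at hcon
    have := hφmono (hIccsub (hψmem v hv)) (hIccsub (hψmem u hu)) hcon
    rw [hφψ u hu, hφψ v hv] at this
    exact absurd huv (not_le.2 this)
  -- the sequence β
  set β : ℕ → ℝ := fun k => φ (r k) with hβdef
  have hβmem : ∀ k, β k ∈ Icc (0:ℝ) A := fun k => hφmaps (hrmem k)
  have hψβ : ∀ k, ψ (β k) = r k := fun k => hψφ (r k) (hrmem k)
  have hβdec : ∀ k, β (k + 1) ≤ β k := fun k =>
    hφmono' (hIccsub (hrmem (k + 1))) (hIccsub (hrmem k)) (hrdec k)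
  have hβ0 : β 0 = A := by simp only [hβdef, hr00, hAdef]
  -- chain rule : ψ' (φ s) * φ' s = 1 on (0, r0]
  have hDchain : ∀ s ∈ Ioc (0:ℝ) r0, ψ' (φ s) * φ' s = 1 := by
    intro s hs
    have hsIoo : s ∈ Ioo 0 rbar := ⟨hs.1, lt_of_le_of_lt hs.2 hr0⟩
    have hsIcc : s ∈ Icc (0:ℝ) r0 := ⟨hs.1.le, hs.2⟩
    have h1 : HasDerivWithinAt (ψ ∘ φ) (ψ' (φ s) * φ' s) (Icc 0 r0) s :=
      (hψderiv (φ s) (hφmaps hsIcc)).comp s (hφderiv s hsIoo).hasDerivWithinAt hφmaps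
    have h3 : HasDerivWithinAt (ψ ∘ φ) 1 (Icc (0:ℝ) r0) s :=
      (hasDerivWithinAt_id s (Icc (0:ℝ) r0)).congr
        (fun t ht => hψφ t ht) (hψφ s hsIcc)
    have hu : UniqueDiffWithinAt ℝ (Icc (0:ℝ) r0) s := (uniqueDiffOn_Icc hr0pos) s hsIcc
    exact (h1.derivWithin hu).symm.trans (h3.derivWithin hu)
  -- ψ' is positive on (0, A]
  have hψ'fact : ∀ u ∈ Ioc (0:ℝ) A, 0 < ψ' u ∧ ψ' u * φ' (ψ u) = 1 := by
    intro u hu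
    have huIcc : u ∈ Icc (0:ℝ) A := ⟨hu.1.le, hu.2⟩
    have hsmem : ψ u ∈ Icc (0:ℝ) r0 := hψmem u huIcc
    have hspos : 0 < ψ u := by
      rcases eq_or_lt_of_le hsmem.1 with h | h
      · exfalso
        have := hφψ u huIcc
        rw [← h, hφ0] at this
        exact absurd this.symm (ne_of_gt hu.1)
      · exact h
    have hchain := hDchain (ψ u) ⟨hspos, hsmem.2⟩
    rw [hφψ u huIcc] at hchain
    have hφ'p : 0 < φ' (ψ u) := hφ'pos (ψ u) ⟨hspos, lt_of_le_of_lt hsmem.2 hr0⟩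
    refine ⟨?_, hchain⟩
    nlinarith [hchain, hφ'p]
  -- ψ' is monotone on (0, A]
  have hψ'mono : ∀ u ∈ Ioc (0:ℝ) A, ∀ v ∈ Ioc (0:ℝ) A, u ≤ v → ψ' u ≤ ψ' v := by
    intro u hu v hv huv
    obtain ⟨hu1, hu2⟩ := hψ'fact u hu
    obtain ⟨hv1, hv2⟩ := hψ'fact v hv
    have hpsiuv : ψ u ≤ ψ v := hψmono u ⟨hu.1.le, hu.2⟩ v ⟨hv.1.le, hv.2⟩ huv
    have hmemu : ψ u ∈ Ioo (0:ℝ) rbar := by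
      have h1 := hψmem u ⟨hu.1.le, hu.2⟩
      have hp : 0 < ψ u := by
        rcases eq_or_lt_of_le h1.1 with h | h
        · exfalso
          have := hφψ u ⟨hu.1.le, hu.2⟩
          rw [← h, hφ0] at this
          exact absurd this.symm (ne_of_gt hu.1)
        · exact h
      exact ⟨hp, lt_of_le_of_lt h1.2 hr0⟩
    have hmemv : ψ v ∈ Ioo (0:ℝ) rbar := by
      have h1 := hψmem v ⟨hv.1.le, hv.2⟩
      have hp : 0 < ψ v := by
        rcases eq_or_lt_of_le h1.1 with h | h
        · exfalso
          have := hφψ v ⟨hv.1.le, hv.2⟩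
          rw [← h, hφ0] at this
          exact absurd this.symm (ne_of_gt hv.1)
        · exact h
      exact ⟨hp, lt_of_le_of_lt h1.2 hr0⟩
    have hanti := my_conc_deriv_anti φ φ' rbar hφconc hφderiv hmemu hmemv hpsiuv
    have hφu : 0 < φ' (ψ u) := hφ'pos _ hmemu
    have hφv : 0 < φ' (ψ v) := hφ'pos _ hmemv
    nlinarith [hu2, hv2, hanti, hu1, hv1, hφu, hφv]
  -- subgradient inequality for ψ
  have hsubgrad : ∀ w ∈ Ioc (0:ℝ) A, ∀ q ∈ Icc (0:ℝ) A, q < w →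
      ψ w - ψ q ≤ ψ' w * (w - q) := by
    intro w hw q hq hqw
    have hψcont : ContinuousOn ψ (Icc 0 A) := fun z hz => (hψderiv z hz).continuousWithinAt
    have hcont : ContinuousOn ψ (Icc q w) :=
      hψcont.mono (Icc_subset_Icc hq.1 hw.2)
    have hder : ∀ c ∈ Ioo q w, HasDerivAt ψ (ψ' c) c := by
      intro c hc
      have hcIoo : c ∈ Ioo (0:ℝ) A := ⟨lt_of_le_of_lt hq.1 hc.1, lt_of_lt_of_le hc.2 hw.2⟩
      exact (hψderiv c ⟨hcIoo.1.le, hcIoo.2.le⟩).hasDerivAt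
        (Icc_mem_nhds hcIoo.1 hcIoo.2)
    obtain ⟨c, hc, hceq⟩ := exists_hasDerivAt_eq_slope ψ ψ' hqw hcont hder
    have hcmono : ψ' c ≤ ψ' w :=
      hψ'mono c ⟨lt_of_le_of_lt hq.1 hc.1, (le_of_lt hc.2).trans hw.2⟩ w hw hc.2.le
    have hwq : 0 < w - q := by linarith
    rw [hceq] at hcmono
    calc ψ w - ψ q = (ψ w - ψ q) / (w - q) * (w - q) := by field_simp
    _ ≤ ψ' w * (w - q) := mul_le_mul_of_nonneg_right hcmono hwq.le
  -- ζ facts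
  have hsqnn : (0:ℝ) ≤ 1 + 2 * ℓ * a / b ^ 2 := by positivity
  have hsq : Real.sqrt (1 + 2 * ℓ * a / b ^ 2) ^ 2 = 1 + 2 * ℓ * a / b ^ 2 :=
    Real.sq_sqrt hsqnn
  have hsqrt1 : 1 < Real.sqrt (1 + 2 * ℓ * a / b ^ 2) := by
    nlinarith [Real.sqrt_nonneg (1 + 2 * ℓ * a / b ^ 2), hsq,
      div_pos (by positivity : (0:ℝ) < 2 * ℓ * a) (by positivity : (0:ℝ) < b ^ 2)]
  have hζpos : 0 < ζ := by
    rw [hζ]; exact div_pos (by linarith) hℓ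
  have hζid : ℓ / 2 * ζ ^ 2 + ζ = a / b ^ 2 := by
    set S := Real.sqrt (1 + 2 * ℓ * a / b ^ 2) with hS
    clear_value S
    have hb2 : (b:ℝ)^2 ≠ 0 := by positivity
    have hl : (ℓ:ℝ) ≠ 0 := ne_of_gt hℓ
    have h1 : ℓ / 2 * ζ ^ 2 + ζ = (S ^ 2 - 1) / (2 * ℓ) := by
      rw [hζ]; field_simp; ring
    rw [h1, hsq]
    field_simp
    ring
  -- KL consequences
  have hKLk : ∀ k, 0 < r (k + 1) →
      ψ' (β (k + 1)) ≤ b * d k ∧ 1 ≤ φ' (r (k + 1)) * (b * d k) := by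
    intro k hpos
    obtain ⟨ω, hω, hωb⟩ := hH2 k
    have hf1 : 0 < f (x (k + 1)) := by
      rw [hfin (k + 1)]
      exact_mod_cast hpos
    have hf2 : f (x (k + 1)) < (rbar : EReal) := by
      rw [hfin (k + 1)]
      exact_mod_cast lt_of_le_of_lt (hrler0 (k + 1)) hr0
    have hkl := hKL (x (k + 1)) hf1 hf2 ω hω
    have htr : (f (x (k + 1))).toReal = r (k + 1) := rfl
    rw [htr] at hkl
    have hφ'p : 0 < φ' (r (k + 1)) :=
      hφ'pos (r (k + 1)) ⟨hpos, lt_of_le_of_lt (hrler0 (k + 1)) hr0⟩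
    have h1 : 1 ≤ φ' (r (k + 1)) * (b * d k) := by
      calc (1:ℝ) ≤ φ' (r (k + 1)) * ‖ω‖ := hkl
      _ ≤ φ' (r (k + 1)) * (b * d k) := mul_le_mul_of_nonneg_left hωb hφ'p.le
    have hβpos : 0 < β (k + 1) := by
      have := hφmono (show (0:ℝ) ∈ Ico 0 rbar from ⟨le_rfl, hrbar⟩)
        (hIccsub (hrmem (k + 1))) hpos
      rwa [hφ0] at this
    obtain ⟨hψ'p, hψ'eq⟩ := hψ'fact (β (k + 1)) ⟨hβpos, (hβmem (k + 1)).2⟩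
    have hψr : ψ (β (k + 1)) = r (k + 1) := hψβ (k + 1)
    rw [hψr] at hψ'eq
    constructor
    · nlinarith [h1, hψ'eq, hψ'p, hφ'p]
    · exact h1
  -- descent lemma for ψ
  have hdesc := my_descent ψ ψ' A ℓ hA hψderiv hψ'lip hℓ.le
  -- α k ∈ Icc 0 A for all k
  have hαmemall : ∀ k, α k ∈ Icc (0:ℝ) A := by
    intro k
    cases k with
    | zero => rw [hα0]; exact ⟨hA.le, le_rfl⟩
    | succ k => exact hαmem k
  -- the comparison β k ≤ α k
  have hβα : ∀ k, β k ≤ α k := by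
    intro k
    induction k with
    | zero => rw [hβ0, hα0]
    | succ k ih =>
      rcases eq_or_lt_of_le (hrnn (k + 1)) with h0 | hpos
      · have hβz : β (k + 1) = 0 := by
          simp only [hβdef, ← h0, hφ0]
        rw [hβz]; exact (hαmem k).1
      · set B := β (k + 1) with hBdef
        have hBpos : 0 < B := by
          have := hφmono (show (0:ℝ) ∈ Ico 0 rbar from ⟨le_rfl, hrbar⟩)
            (hIccsub (hrmem (k + 1))) hpos
          rwa [hφ0] at this
        have hBIcc : B ∈ Icc (0:ℝ) A := hβmem (k + 1)
        set s' := ψ' B with hs'def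
        have hs'pos : 0 < s' := (hψ'fact B ⟨hBpos, hBIcc.2⟩).1
        obtain ⟨hKL1, _⟩ := hKLk k hpos
        have hkey : a / b ^ 2 * s' ^ 2 ≤ ψ (β k) - ψ B := by
          have h1 : s' ^ 2 ≤ b ^ 2 * d k ^ 2 := by nlinarith [hKL1, hs'pos, hdnn k]
          have h2 : a * d k ^ 2 ≤ r k - r (k + 1) := by linarith [hstep k]
          have h3 : ψ (β k) = r k := hψβ k
          have h4 : ψ B = r (k + 1) := hψβ (k + 1)
          rw [h3, h4]
          have hb2 : (0:ℝ) < b ^ 2 := by positivity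
          rw [div_mul_eq_mul_div, div_le_iff₀ hb2]
          nlinarith [h1, h2]
        have hδnn : 0 ≤ β k - B := by linarith [hβdec k]
        have hdesck : ψ (β k) ≤ ψ B + s' * (β k - B) + ℓ / 2 * (β k - B) ^ 2 :=
          hdesc B (β k) hBIcc (hβmem k)
        have hδζ : ζ * s' ≤ β k - B := by
          by_contra hcon
          push_neg at hcon
          have h2 : (β k - B) - ζ * s' < 0 := by linarith
          have h3 : 0 < s' + ℓ / 2 * ((β k - B) + ζ * s') := by positivity
          have h4 := mul_neg_of_neg_of_pos h2 h3
          nlinarith [hkey, hdesck, hζid, h4]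
        by_contra hcon
        push_neg at hcon
        have hm := hαmin k B hBIcc
        have h2ζ : (0:ℝ) < 2 * ζ := by linarith
        have hne2 : (2 * ζ) ≠ 0 := ne_of_gt h2ζ
        have hm2 := mul_le_mul_of_nonneg_right hm h2ζ.le
        rw [add_mul, add_mul, div_mul_cancel₀ _ hne2, div_mul_cancel₀ _ hne2] at hm2
        have hsubB : ψ B - ψ (α (k + 1)) ≤ s' * (B - α (k + 1)) :=
          hsubgrad B ⟨hBpos, hBIcc.2⟩ (α (k + 1)) (hαmem k) hcon
        have hζα : ζ * s' ≤ α k - B := by linarith [hδζ, ih]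
        have hBq : 0 < B - α (k + 1) := by linarith
        nlinarith [hm2, mul_le_mul_of_nonneg_right hζα hBq.le,
          mul_le_mul_of_nonneg_left hsubB h2ζ.le, sq_nonneg (B - α (k + 1)), hζpos]
  -- value bound
  have hvalue : ∀ k, f (x k) ≤ ((ψ (α k) : ℝ) : EReal) := by
    intro k
    rw [hfin k]
    have hle : r k ≤ ψ (α k) := by
      rw [← hψβ k]
      exact hψmono (β k) (hβmem k) (α k) (hαmemall k) (hβα k)
    exact_mod_cast hle
  
  -- the chain inequality
  have hβnn : ∀ k, 0 ≤ β k := fun k => (hβmem k).1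
  have hchain : ∀ i, d (i + 1) ≤ d i / 2 + b / a * (β (i + 1) - β (i + 2)) / 2 := by
    intro i
    rcases eq_or_lt_of_le (hrnn (i + 1)) with h0 | hpos
    · have hr2 : r (i + 2) = 0 := le_antisymm (by linarith [hrdec (i + 1)]) (hrnn (i + 2))
      have hd0 : d (i + 1) = 0 := by
        have h := hstep (i + 1)
        rw [hr2, ← h0] at h
        have hsq0 : d (i + 1) ^ 2 = 0 := le_antisymm (by nlinarith) (sq_nonneg _)
        exact sq_eq_zero_iff.1 hsq0
      have hβeq : β (i + 1) = β (i + 2) := by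
        simp only [hβdef, ← h0, hr2]
      rw [hd0, hβeq]
      simp only [sub_self, mul_zero, zero_div, add_zero]
      linarith [hdnn i]
    · obtain ⟨_, hKL2⟩ := hKLk i hpos
      have hφ'p : 0 < φ' (r (i + 1)) :=
        hφ'pos (r (i + 1)) ⟨hpos, lt_of_le_of_lt (hrler0 (i + 1)) hr0⟩
      have hJ : φ' (r (i + 1)) * (r (i + 1) - r (i + 2)) ≤ β (i + 1) - β (i + 2) := by
        rcases eq_or_lt_of_le (hrdec (i + 1)) with heq | hlt
        · simp only [hβdef]
          rw [heq]
          simp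
        · have hcont : ContinuousOn φ (Icc (r (i + 2)) (r (i + 1))) :=
            hφcont.mono (fun t ht => ⟨le_trans (hrnn (i + 2)) ht.1,
              lt_of_le_of_lt (le_trans ht.2 (hrler0 (i + 1))) hr0⟩)
          have hder : ∀ c ∈ Ioo (r (i + 2)) (r (i + 1)), HasDerivAt φ (φ' c) c := by
            intro c hc
            exact hφderiv c ⟨lt_of_le_of_lt (hrnn (i + 2)) hc.1,
              lt_of_lt_of_le hc.2 (le_trans (hrler0 (i + 1)) hr0.le)⟩
          obtain ⟨c, hc, hceq⟩ := exists_hasDerivAt_eq_slope φ φ' hlt hcont hder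
          have hcIoo : c ∈ Ioo (0:ℝ) rbar := ⟨lt_of_le_of_lt (hrnn (i + 2)) hc.1,
            lt_of_lt_of_le hc.2 (le_trans (hrler0 (i + 1)) hr0.le)⟩
          have hanti := my_conc_deriv_anti φ φ' rbar hφconc hφderiv hcIoo
            ⟨hpos, lt_of_le_of_lt (hrler0 (i + 1)) hr0⟩ hc.2.le
          have hgap : 0 < r (i + 1) - r (i + 2) := by linarith
          have hle2 : φ' (r (i + 1)) ≤
              (φ (r (i + 1)) - φ (r (i + 2))) / (r (i + 1) - r (i + 2)) := by
            rw [← hceq]; exact hanti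
          rw [le_div_iff₀ hgap] at hle2
          exact hle2
      have h2 : a * d (i + 1) ^ 2 ≤ r (i + 1) - r (i + 2) := by linarith [hstep (i + 1)]
      have h3 : a * d (i + 1) ^ 2 ≤ (β (i + 1) - β (i + 2)) * (b * d i) := by
        have t1 : a * d (i + 1) ^ 2 * 1 ≤ a * d (i + 1) ^ 2 * (φ' (r (i + 1)) * (b * d i)) :=
          mul_le_mul_of_nonneg_left hKL2 (by positivity)
        have t2 : φ' (r (i + 1)) * (a * d (i + 1) ^ 2) ≤
            φ' (r (i + 1)) * (r (i + 1) - r (i + 2)) :=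
          mul_le_mul_of_nonneg_left h2 hφ'p.le
        have t3 : φ' (r (i + 1)) * (a * d (i + 1) ^ 2) * (b * d i) ≤
            (β (i + 1) - β (i + 2)) * (b * d i) :=
          mul_le_mul_of_nonneg_right (le_trans t2 hJ) (by positivity)
        nlinarith [t1, t3]
      have hΔnn : 0 ≤ β (i + 1) - β (i + 2) := by linarith [hβdec (i + 1)]
      by_contra hcon
      push_neg at hcon
      have hd2 : d (i + 1) ^ 2 ≤ d i * (b / a * (β (i + 1) - β (i + 2))) := by
        rw [div_mul_eq_mul_div, mul_div_assoc']
        rw [le_div_iff₀ ha]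
        nlinarith [h3]
      have h5 := pow_lt_pow_left₀ hcon
        (by positivity : (0:ℝ) ≤ d i / 2 + b / a * (β (i + 1) - β (i + 2)) / 2) two_ne_zero
      nlinarith [hd2, h5, sq_nonneg (d i / 2 - b / a * (β (i + 1) - β (i + 2)) / 2)]
  -- partial sums
  have hsum : ∀ k m, (∑ j ∈ Finset.range m, d (k + 1 + j)) + d (k + m) ≤
      d k + b / a * (β (k + 1) - β (k + 1 + m)) := by
    intro k m
    induction m with
    | zero => simp
    | succ m ih =>
      rw [Finset.sum_range_succ]
      have hc := hchain (k + m)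
      have he1 : k + 1 + m = k + m + 1 := by omega
      have he2 : k + (m + 1) = k + m + 1 := by omega
      have he3 : k + 1 + (m + 1) = k + m + 2 := by omega
      rw [he1, he2, he3]
      rw [he1] at ih
      linarith [ih, hc]
  have hsum' : ∀ k m, (∑ j ∈ Finset.range m, d (k + 1 + j)) ≤ d k + b / a * β (k + 1) := by
    intro k m
    have h := hsum k m
    have h2 : b / a * (β (k + 1) - β (k + 1 + m)) ≤ b / a * β (k + 1) :=
      mul_le_mul_of_nonneg_left (by linarith [hβnn (k + 1 + m)]) (by positivity)
    linarith [hdnn (k + m)]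
  -- summability and Cauchy
  have hsummable : Summable d := by
    apply summable_of_sum_range_le (c := d 0 + (d 0 + b / a * β 1)) hdnn
    intro n
    cases n with
    | zero =>
      simp only [Finset.range_zero, Finset.sum_empty]
      have := hβnn 1
      positivity
    | succ m =>
      rw [Finset.sum_range_succ']
      have heq : (∑ i ∈ Finset.range m, d (i + 1)) = ∑ j ∈ Finset.range m, d (0 + 1 + j) :=
        Finset.sum_congr rfl (fun i _ => by congr 1; omega)
      have h := hsum' 0 m
      rw [← heq] at h
      simp only [Nat.zero_add] at h
      linarith [h]
  have hdistsum : Summable (fun n => dist (x n) (x (n + 1))) :=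
    hsummable.congr (fun n => by
      simp only [hddef, dist_eq_norm, norm_sub_rev])
  have hcauchy : CauchySeq x := cauchySeq_of_summable_dist hdistsum
  obtain ⟨xstar, hx⟩ := cauchySeq_tendsto_of_complete hcauchy
  have hdtend : Tendsto d atTop (𝓝 0) := hsummable.tendsto_atTop_zero
  -- r tends to 0
  have hrant : Antitone r := antitone_nat_of_succ_le hrdec
  have hbdd : BddBelow (Set.range r) := by
    refine ⟨0, ?_⟩
    rintro y ⟨k, rfl⟩
    exact hrnn k
  have hrL : Tendsto r atTop (𝓝 (⨅ k, r k)) := tendsto_atTop_ciInf hrant hbdd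
  have hL0 : (⨅ k, r k) = 0 := by
    by_contra hne
    have hLpos : 0 < ⨅ k, r k := lt_of_le_of_ne (le_ciInf hrnn) (Ne.symm hne)
    have hLle : ∀ k, (⨅ k, r k) ≤ r k := fun k => ciInf_le hbdd k
    have hLr0 : (⨅ k, r k) ≤ r0 := le_trans (hLle 0) hr00.le
    have hsubset : Icc (⨅ k, r k) r0 ⊆ Ioo 0 rbar := fun t ht =>
      ⟨lt_of_lt_of_le hLpos ht.1, lt_of_le_of_lt ht.2 hr0⟩
    obtain ⟨sM, hsM, hM⟩ := isCompact_Icc.exists_isMaxOn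
      (Set.nonempty_Icc.2 hLr0) (hφ'cont.mono hsubset)
    have hub : ∀ k, 1 ≤ φ' sM * (b * d k) := by
      intro k
      obtain ⟨_, h2⟩ := hKLk k (lt_of_lt_of_le hLpos (hLle (k + 1)))
      calc (1:ℝ) ≤ φ' (r (k + 1)) * (b * d k) := h2
      _ ≤ φ' sM * (b * d k) := mul_le_mul_of_nonneg_right
        (hM ⟨hLle (k + 1), hrler0 (k + 1)⟩) (by positivity)
    have htend : Tendsto (fun k => φ' sM * (b * d k)) atTop (𝓝 (φ' sM * (b * 0))) :=
      ((hdtend.const_mul b).const_mul (φ' sM))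
    rw [mul_zero, mul_zero] at htend
    obtain ⟨k, hk⟩ := (htend.eventually_lt_const (by norm_num : (0:ℝ) < 1)).exists
    linarith [hub k]
  rw [hL0] at hrL
  -- f (x k) tends to 0
  have hflim : Tendsto (fun k => f (x k)) atTop (𝓝 (0 : EReal)) := by
    have h1 : Tendsto (fun k => ((r k : ℝ) : EReal)) atTop (𝓝 ((0:ℝ) : EReal)) :=
      (continuous_coe_real_ereal.tendsto 0).comp hrL
    rw [EReal.coe_zero] at h1
    exact h1.congr (fun k => (hfin k).symm)
  -- xstar is a minimizer
  have hxmin : xstar ∈ argminSet f := by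
    have hle0 : f xstar ≤ 0 := by
      by_contra hpos
      push_neg at hpos
      obtain ⟨c, hc0, hcf⟩ := exists_between hpos
      have hev2 := hx.eventually (hlsc xstar c hcf)
      have hev3 := hflim.eventually_lt_const hc0
      obtain ⟨k, hk1, hk2⟩ := (hev2.and hev3).exists
      exact absurd (hk1.trans hk2) (lt_irrefl c)
    intro y
    exact le_trans hle0 (hfge y)
  refine ⟨xstar, hxmin, hx, hvalue, ?_⟩
  intro k
  have hdistm : ∀ m, ‖x (k + 1) - x (k + 1 + m)‖ ≤ d k + b / a * β (k + 1) := by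
    intro m
    have h := dist_le_range_sum_dist (fun j => x (k + 1 + j)) m
    have he : ∀ i, dist (x (k + 1 + i)) (x (k + 1 + (i + 1))) = d (k + 1 + i) := by
      intro i
      rw [dist_eq_norm, norm_sub_rev]
      rfl
    calc ‖x (k + 1) - x (k + 1 + m)‖ = dist (x (k + 1 + 0)) (x (k + 1 + m)) := by
          rw [dist_eq_norm]
    _ ≤ ∑ i ∈ Finset.range m, dist (x (k + 1 + i)) (x (k + 1 + (i + 1))) := h
    _ = ∑ i ∈ Finset.range m, d (k + 1 + i) :=
        Finset.sum_congr rfl (fun i _ => he i)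
    _ ≤ d k + b / a * β (k + 1) := hsum' k m
  have hxm : Tendsto (fun m => x (k + 1 + m)) atTop (𝓝 xstar) := by
    have h := hx.comp (tendsto_add_atTop_nat (k + 1))
    exact h.congr (fun m => by simp only [Function.comp_apply]; congr 1; omega)
  have hnormlim : Tendsto (fun m => ‖x (k + 1) - x (k + 1 + m)‖) atTop
      (𝓝 ‖x (k + 1) - xstar‖) :=
    (tendsto_const_nhds.sub hxm).norm
  have htail : ‖x (k + 1) - xstar‖ ≤ d k + b / a * β (k + 1) :=
    le_of_tendsto hnormlim (Filter.Eventually.of_forall hdistm)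
  have hdk : d k ≤ Real.sqrt (ψ (α k) / a) := by
    have h1 : a * d k ^ 2 ≤ r k := by linarith [hstep k, hrnn (k + 1)]
    have h2 : r k ≤ ψ (α k) := by
      rw [← hψβ k]
      exact hψmono _ (hβmem k) _ (hαmemall k) (hβα k)
    have h3 : d k ^ 2 ≤ ψ (α k) / a := by
      rw [le_div_iff₀ ha]
      nlinarith [h1, h2]
    calc d k = Real.sqrt (d k ^ 2) := (Real.sqrt_sq (hdnn k)).symm
    _ ≤ Real.sqrt (ψ (α k) / a) := Real.sqrt_le_sqrt h3
  have hba : b / a * β (k + 1) ≤ b / a * α (k + 1) :=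
    mul_le_mul_of_nonneg_left (hβα (k + 1)) (by positivity)
  linarith [htail, hdk, hba]
end
end

section
/- Comparison of one-dimensional proximal sequences (Claim 2 in the proof of Theorem 4.4): let ψ : [0,∞) → ℝ be convex and differentiable with ψ′ continuous, nondecreasing, ψ′(0) = 0 and ψ′(s) > 0 for s > 0. Let (λ⁰_k)_{k≥0} and (λ¹_k)_{k≥0} be positive sequences with λ⁰_k ≥ λ¹_k for all k, and let (β⁰_k)_{k≥0}, (β¹_k)_{k≥0} be sequences of nonnegative reals with β⁰₀ = β¹₀ > 0 satisfying β⁰_{k+1} + λ⁰_k ψ′(β⁰_{k+1}) = β⁰_k and β¹_{k+1} + λ¹_k ψ′(β¹_{k+1}) = β¹_k for all k ≥ 0. Then β⁰_k ≤ β¹_k for all k ≥ 0. -/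
open Metric Set Filter

noncomputable section

/-- **Claim 2 in the proof of Theorem 4.4** (comparison of one-dimensional
proximal sequences): let `ψ : [0,∞) → ℝ` be convex and differentiable with `ψ'`
continuous, nondecreasing, `ψ'(0) = 0` and `ψ'(s) > 0` for `s > 0`.  If
`(λ⁰_k)`, `(λ¹_k)` are positive sequences with `λ⁰_k ≥ λ¹_k`, and `(β⁰_k)`,
`(β¹_k)` are nonnegative with `β⁰₀ = β¹₀ > 0` and
`β⁰_{k+1} + λ⁰_k ψ'(β⁰_{k+1}) = β⁰_k`, `β¹_{k+1} + λ¹_k ψ'(β¹_{k+1}) = β¹_k`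
for all `k`, then `β⁰_k ≤ β¹_k` for all `k`. -/
theorem stmt12 (ψ ψ' : ℝ → ℝ)
    (hconv : ConvexOn ℝ (Ici 0) ψ)
    (hderiv : ∀ s ∈ Ici (0 : ℝ), HasDerivWithinAt ψ (ψ' s) (Ici 0) s)
    (hcont : ContinuousOn ψ' (Ici 0))
    (hmono : MonotoneOn ψ' (Ici 0))
    (h0 : ψ' 0 = 0)
    (hpos : ∀ s : ℝ, 0 < s → 0 < ψ' s)
    (lam0 lam1 : ℕ → ℝ) (β0 β1 : ℕ → ℝ)
    (hlam1pos : ∀ k, 0 < lam1 k) (hlam0pos : ∀ k, 0 < lam0 k)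
    (hlam : ∀ k, lam1 k ≤ lam0 k)
    (hβ0nonneg : ∀ k, 0 ≤ β0 k) (hβ1nonneg : ∀ k, 0 ≤ β1 k)
    (hinit : β0 0 = β1 0) (hinitpos : 0 < β0 0)
    (hrec0 : ∀ k, β0 (k + 1) + lam0 k * ψ' (β0 (k + 1)) = β0 k)
    (hrec1 : ∀ k, β1 (k + 1) + lam1 k * ψ' (β1 (k + 1)) = β1 k) :
    ∀ k, β0 k ≤ β1 k := by
  have hnn : ∀ s : ℝ, 0 ≤ s → 0 ≤ ψ' s := by
    intro s hs
    calc (0 : ℝ) = ψ' 0 := h0.symm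
    _ ≤ ψ' s := hmono (Set.mem_Ici.mpr (le_refl 0)) hs hs
  intro k
  induction k with
  | zero => exact hinit.le
  | succ k ih =>
    by_contra h
    push_neg at h
    have h1 : ψ' (β1 (k + 1)) ≤ ψ' (β0 (k + 1)) :=
      hmono (hβ1nonneg _) (hβ0nonneg _) h.le
    have h2 : lam1 k * ψ' (β1 (k + 1)) ≤ lam0 k * ψ' (β0 (k + 1)) :=
      mul_le_mul (hlam k) h1 (hnn _ (hβ1nonneg _)) (hlam0pos k).le
    have : β1 k < β0 k := by
      rw [← hrec0 k, ← hrec1 k]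
      exact add_lt_add_of_lt_of_le h h2
    exact absurd ih (not_le.mpr this)
end
end

section
/- Linear convergence under a quadratic-type KL inequality (Corollary 4.7): let r̄ > 0 and ℓ > 0, and assume ‖∂⁰f(x)‖² ≥ 2ℓ·f(x) for every x with 0 < f(x) < r̄ (i.e. f has the KL property on {0 < f < r̄} with desingularizing function φ(s) = √(2s/ℓ)). Let (x_k)_{k≥0} be a subgradient descent sequence for f with constants a, b > 0 and f(x₀) ∈ (0,r̄), and set σ = ℓ/b². Then (x_k) converges strongly to some x* ∈ argmin f and for all k: f(x_k) ≤ f(x₀)/(1 + 2aσ)^k (k ≥ 0), and ‖x_k − x*‖ ≤ [1 + 1/(aσ·√(1 + 1/(2aσ)))] · √(f(x₀)/a) / (1 + 2aσ)^{(k−1)/2} (k ≥ 1). -/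
open Metric Set Filter
open scoped RealInnerProductSpace

noncomputable section

variable {H : Type*} [NormedAddCommGroup H] [InnerProductSpace ℝ H] [CompleteSpace H]

private lemma sqrt_eq_of_sq_eq {x y : ℝ} (hx : 0 ≤ x) (hy : 0 ≤ y) (h : x ^ 2 = y ^ 2) :
    x = y := by
  have := Real.sqrt_sq hx
  rw [← this, h, Real.sqrt_sq hy]

private lemma amgm_aux {w u v : ℝ} (hw : 0 ≤ w) (hu : 0 ≤ u) (hv : 0 ≤ v)
    (h : w ^ 2 ≤ u * v) : 2 * w ≤ u + v := by
  nlinarith [sq_nonneg (u - v), sq_nonneg (u + v - 2 * w)]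

set_option maxHeartbeats 1000000 in
/-- **Corollary 4.7** (linear convergence under a quadratic-type KL inequality):
assume `‖∂⁰f(x)‖² ≥ 2ℓ·f(x)` whenever `0 < f(x) < r̄` (i.e. `f` is KL with
desingularizing function `φ(s) = √(2s/ℓ)`), and let `(x_k)` be a subgradient
descent sequence with constants `a, b > 0` and `f(x₀) ∈ (0,r̄)`.  With
`σ = ℓ/b²`, the sequence converges strongly to some `x* ∈ argmin f`,
`f(x_k) ≤ f(x₀)/(1+2aσ)^k` for `k ≥ 0`, and
`‖x_k − x*‖ ≤ [1 + 1/(aσ√(1+1/(2aσ)))]·√(f(x₀)/a)/(1+2aσ)^{(k−1)/2}` for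
`k ≥ 1` (the latter stated with the index shift `k ↦ k+1`). -/
theorem stmt13 (f : H → EReal)
    (hbot : ∀ x, f x ≠ ⊥) (htop : ∃ x, f x ≠ ⊤)
    (hlsc : LowerSemicontinuous f)
    (hconv : ∀ x y : H, ∀ t : ℝ, 0 < t → t < 1 →
      f (t • x + (1 - t) • y) ≤ (t : EReal) * f x + ((1 - t : ℝ) : EReal) * f y)
    (hmin : ∃ z, z ∈ argminSet f ∧ f z = 0)
    (rbar ℓ : ℝ) (hrbar : 0 < rbar) (hℓ : 0 < ℓ)
    (hKL : ∀ x, 0 < f x → f x < (rbar : EReal) →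
      ∀ u ∈ subdiff f x, 2 * ℓ * (f x).toReal ≤ ‖u‖ ^ 2)
    (a b : ℝ) (ha : 0 < a) (hb : 0 < b)
    (x : ℕ → H)
    (hH1 : ∀ k : ℕ, f (x (k + 1)) + ((a * ‖x (k + 1) - x k‖ ^ 2 : ℝ) : EReal) ≤ f (x k))
    (hH2 : ∀ k : ℕ, ∃ ω ∈ subdiff f (x (k + 1)), ‖ω‖ ≤ b * ‖x (k + 1) - x k‖)
    (hfx0pos : 0 < f (x 0)) (hfx0 : f (x 0) < (rbar : EReal))
    (σ : ℝ) (hσ : σ = ℓ / b ^ 2) :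
    ∃ xstar ∈ argminSet f, Tendsto x atTop (nhds xstar) ∧
      (∀ k : ℕ, (f (x k)).toReal ≤ (f (x 0)).toReal / (1 + 2 * a * σ) ^ k) ∧
      ∀ k : ℕ, ‖x (k + 1) - xstar‖ ≤
        (1 + 1 / (a * σ * Real.sqrt (1 + 1 / (2 * a * σ)))) *
          Real.sqrt ((f (x 0)).toReal / a) / (1 + 2 * a * σ) ^ ((k : ℝ) / 2) := by
  obtain ⟨z, hzmin, hz0⟩ := hmin
  have hf0 : ∀ y, (0 : EReal) ≤ f y := fun y => hz0 ▸ hzmin y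
  have hσpos : 0 < σ := by rw [hσ]; positivity
  set q : ℝ := 1 + 2 * a * σ with hqdef
  have hq1 : 1 < q := by simp only [hqdef]; nlinarith
  have hq0 : 0 < q := by linarith
  -- finiteness
  have hne_top : ∀ k, f (x k) ≠ ⊤ := by
    intro k
    induction k with
    | zero => exact (hfx0.trans_le le_top).ne
    | succ n ih =>
      intro htop'
      have h1 := hH1 n
      rw [htop'] at h1
      simp at h1
      exact ih (top_le_iff.mp h1)
  set r : ℕ → ℝ := fun k => (f (x k)).toReal with hrdef
  have hfeq : ∀ k, f (x k) = ((r k : ℝ) : EReal) := fun k =>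
    (EReal.coe_toReal (hne_top k) (hbot _)).symm
  have hr0 : ∀ k, 0 ≤ r k := by
    intro k
    have := hf0 (x k)
    rw [hfeq k] at this
    exact_mod_cast this
  have hH1R : ∀ k, r (k + 1) + a * ‖x (k + 1) - x k‖ ^ 2 ≤ r k := by
    intro k
    have h1 := hH1 k
    rw [hfeq k, hfeq (k + 1), ← EReal.coe_add] at h1
    exact_mod_cast h1
  have hrmono : ∀ k, r (k + 1) ≤ r k := by
    intro k
    have h1 := hH1R k
    have h2 : 0 ≤ a * ‖x (k + 1) - x k‖ ^ 2 := by positivity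
    linarith
  have hrle0 : ∀ k, r k ≤ r 0 := by
    intro k
    induction k with
    | zero => exact le_refl _
    | succ n ih => exact (hrmono n).trans ih
  have hr0rbar : r 0 < rbar := by
    have := hfx0
    rw [hfeq 0] at this
    exact_mod_cast this
  have hr0pos : 0 < r 0 := by
    have := hfx0pos
    rw [hfeq 0] at this
    exact_mod_cast this
  -- KL in real form
  have hKLR : ∀ k, 0 < r (k + 1) → 2 * ℓ * r (k + 1) ≤ b ^ 2 * ‖x (k + 1) - x k‖ ^ 2 := by
    intro k hk
    obtain ⟨ω, hω, hωb⟩ := hH2 k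
    have h1 : 0 < f (x (k + 1)) := by rw [hfeq]; exact_mod_cast hk
    have h2 : f (x (k + 1)) < (rbar : EReal) := by
      rw [hfeq]
      exact_mod_cast lt_of_le_of_lt (hrle0 (k + 1)) hr0rbar
    have h3 := hKL _ h1 h2 ω hω
    have h4 : ‖ω‖ ^ 2 ≤ (b * ‖x (k + 1) - x k‖) ^ 2 := by
      apply pow_le_pow_left₀ (norm_nonneg _) hωb
    calc 2 * ℓ * r (k + 1) ≤ ‖ω‖ ^ 2 := h3
      _ ≤ (b * ‖x (k + 1) - x k‖) ^ 2 := h4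
      _ = b ^ 2 * ‖x (k + 1) - x k‖ ^ 2 := by ring
  have hb2 : (0 : ℝ) < b ^ 2 := by positivity
  have hσb : σ * b ^ 2 = ℓ := by rw [hσ]; field_simp
  -- linear decrease of values
  have hlin : ∀ k, r (k + 1) * q ≤ r k := by
    intro k
    rcases (hr0 (k + 1)).eq_or_lt with h | h
    · rw [← h]
      simpa using hr0 k
    · have h1 := hKLR k h
      have h2 := hH1R k
      have h3 : a * (2 * ℓ * r (k + 1)) ≤ a * (b ^ 2 * ‖x (k + 1) - x k‖ ^ 2) :=
        mul_le_mul_of_nonneg_left h1 ha.le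
      have hℓeq : 2 * a * ℓ * r (k + 1) = 2 * a * σ * b ^ 2 * r (k + 1) := by
        rw [← hσb]; ring
      have key : b ^ 2 * (r (k + 1) * q) ≤ b ^ 2 * r k := by
        simp only [hqdef]
        nlinarith [mul_le_mul_of_nonneg_left h2 hb2.le, h3, hℓeq]
      exact le_of_mul_le_mul_left key hb2
  have hgeo : ∀ k, r k ≤ r 0 / q ^ k := by
    intro k
    induction k with
    | zero => simp
    | succ n ih =>
      have h1 : r (n + 1) ≤ r n / q := by
        rw [le_div_iff₀ hq0]; exact hlin n
      calc r (n + 1) ≤ r n / q := h1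
        _ ≤ (r 0 / q ^ n) / q := by apply div_le_div_of_nonneg_right ih hq0.le
        _ = r 0 / q ^ (n + 1) := by rw [pow_succ, div_div]
  -- geometric step bound
  set sq : ℝ := Real.sqrt q with hsqdef
  have hsq1 : 1 < sq := by
    rw [hsqdef, show (1:ℝ) = Real.sqrt 1 by simp]
    exact Real.sqrt_lt_sqrt (by norm_num) hq1
  have hsq0 : 0 < sq := by linarith
  set θ : ℝ := sq⁻¹ with hθdef
  have hθ0 : 0 < θ := by positivity
  have hθ1 : θ < 1 := by rw [hθdef]; exact inv_lt_one_of_one_lt₀ hsq1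
  have hθsq : θ ^ 2 = q⁻¹ := by
    rw [hθdef, ← Real.sq_sqrt hq0.le, ← hsqdef]
    rw [inv_pow]
  set s0 : ℝ := Real.sqrt (r 0 / a) with hs0def
  have hs0pos : 0 < s0 := Real.sqrt_pos.mpr (by positivity)
  have hrθ : ∀ k, r k ≤ (Real.sqrt (r 0) * θ ^ k) ^ 2 := by
    intro k
    have : (Real.sqrt (r 0) * θ ^ k) ^ 2 = r 0 * (q⁻¹) ^ k := by
      rw [mul_pow, Real.sq_sqrt hr0pos.le, ← pow_mul, show k * 2 = 2 * k from by ring, pow_mul, hθsq]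
    rw [this]
    calc r k ≤ r 0 / q ^ k := hgeo k
      _ = r 0 * (q⁻¹) ^ k := by rw [inv_pow, div_eq_mul_inv]
  have hgθ : ∀ k, Real.sqrt (r k) ≤ Real.sqrt (r 0) * θ ^ k := by
    intro k
    calc Real.sqrt (r k) ≤ Real.sqrt ((Real.sqrt (r 0) * θ ^ k) ^ 2) :=
          Real.sqrt_le_sqrt (hrθ k)
      _ = Real.sqrt (r 0) * θ ^ k := Real.sqrt_sq (by positivity)
  have hstep : ∀ k, ‖x (k + 1) - x k‖ ≤ s0 * θ ^ k := by
    intro k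
    have h1 : a * ‖x (k + 1) - x k‖ ^ 2 ≤ r k := by
      have := hH1R k; have := hr0 (k + 1); linarith
    have h2 : ‖x (k + 1) - x k‖ ^ 2 ≤ (s0 * θ ^ k) ^ 2 := by
      have h3 : (s0 * θ ^ k) ^ 2 = (r 0 / a) * (q⁻¹) ^ k := by
        rw [mul_pow, hs0def, Real.sq_sqrt (by positivity), ← pow_mul,
          show k * 2 = 2 * k from by ring, pow_mul, hθsq]
      rw [h3]
      have h4 : ‖x (k + 1) - x k‖ ^ 2 ≤ r k / a := by
        rw [le_div_iff₀ ha]; linarith [h1]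
      calc ‖x (k + 1) - x k‖ ^ 2 ≤ r k / a := h4
        _ ≤ (r 0 / q ^ k) / a := div_le_div_of_nonneg_right (hgeo k) ha.le
        _ = (r 0 / a) * (q⁻¹) ^ k := by rw [inv_pow]; ring
    calc ‖x (k + 1) - x k‖ = Real.sqrt (‖x (k + 1) - x k‖ ^ 2) :=
          (Real.sqrt_sq (norm_nonneg _)).symm
      _ ≤ Real.sqrt ((s0 * θ ^ k) ^ 2) := Real.sqrt_le_sqrt h2
      _ = s0 * θ ^ k := Real.sqrt_sq (by positivity)
  -- the key KL half-step inequality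
  set c : ℝ := (b / a) * Real.sqrt (2 / ℓ) with hcdef
  have hc0 : 0 ≤ c := by positivity
  set g : ℕ → ℝ := fun k => Real.sqrt (r k) with hgdef
  have hg0 : ∀ k, 0 ≤ g k := fun k => Real.sqrt_nonneg _
  have hgmono : ∀ k, g (k + 1) ≤ g k := fun k => Real.sqrt_le_sqrt (hrmono k)
  have hhalf : ∀ j, 2 * ‖x (j + 2) - x (j + 1)‖ ≤
      ‖x (j + 1) - x j‖ + c * (g (j + 1) - g (j + 2)) := by
    intro j
    set u := ‖x (j + 1) - x j‖ with hu
    set w := ‖x (j + 2) - x (j + 1)‖ with hw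
    have hw2 : a * w ^ 2 ≤ r (j + 1) - r (j + 2) := by
      have := hH1R (j + 1); simp only [hw]; linarith
    rcases (hr0 (j + 1)).eq_or_lt with h0 | h0
    · -- r (j+1) = 0
      have hr2 : r (j + 2) = 0 := le_antisymm (by rw [h0]; exact hrmono (j + 1)) (hr0 _)
      have hwz : w = 0 := by
        have : a * w ^ 2 ≤ 0 := by rw [← h0] at hw2; linarith [hw2, hr2]
        have hw0 : w ^ 2 ≤ 0 := by nlinarith
        have := sq_nonneg w
        have : w ^ 2 = 0 := le_antisymm hw0 (sq_nonneg w)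
        exact pow_eq_zero_iff (by norm_num) |>.mp this
      have hg1 : g (j + 1) = 0 := by simp only [hgdef, ← h0, Real.sqrt_zero]
      have hg2 : g (j + 2) = 0 := by simp only [hgdef, hr2, Real.sqrt_zero]
      rw [hwz, hg1, hg2]
      simp only [mul_zero, sub_zero, zero_sub, neg_zero]
      positivity
    · -- 0 < r (j+1)
      have hKL1 := hKLR j h0
      have hgs : Real.sqrt (2 * ℓ) * g (j + 1) ≤ b * u := by
        have h1 : Real.sqrt (2 * ℓ * r (j + 1)) ≤ Real.sqrt ((b * u) ^ 2) := by
          apply Real.sqrt_le_sqrt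
          calc 2 * ℓ * r (j + 1) ≤ b ^ 2 * u ^ 2 := hKL1
            _ = (b * u) ^ 2 := by ring
        rw [Real.sqrt_sq (by positivity)] at h1
        calc Real.sqrt (2 * ℓ) * g (j + 1) = Real.sqrt (2 * ℓ * r (j + 1)) := by
              simp only [hgdef]; rw [← Real.sqrt_mul (by positivity)]
          _ ≤ b * u := h1
      have hgg : r (j + 1) - r (j + 2) ≤ 2 * g (j + 1) * (g (j + 1) - g (j + 2)) := by
        have e1 : g (j + 1) ^ 2 = r (j + 1) := Real.sq_sqrt (hr0 _)
        have e2 : g (j + 2) ^ 2 = r (j + 2) := Real.sq_sqrt (hr0 _)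
        nlinarith [sq_nonneg (g (j + 1) - g (j + 2)), hg0 (j + 1), hg0 (j + 2)]
      -- a w^2 ≤ 2 g1 (g1 - g2);  sqrt(2ℓ) g1 ≤ b u
      have hgd : 0 ≤ g (j + 1) - g (j + 2) := by linarith [hgmono (j + 1)]
      have h2l : Real.sqrt (2 / ℓ) * Real.sqrt (2 * ℓ) = 2 := by
        rw [← Real.sqrt_mul (by positivity)]
        rw [show (2 / ℓ) * (2 * ℓ) = 2 ^ 2 by field_simp]
        exact Real.sqrt_sq (by norm_num)
      have hmain : w ^ 2 ≤ u * ((b / a) * Real.sqrt (2 / ℓ) * (g (j + 1) - g (j + 2))) := by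
        have h5 : a * w ^ 2 * Real.sqrt (2 * ℓ) ≤
            2 * (Real.sqrt (2 * ℓ) * g (j + 1)) * (g (j + 1) - g (j + 2)) := by
          have hsl : 0 < Real.sqrt (2 * ℓ) := Real.sqrt_pos.mpr (by positivity)
          have := mul_le_mul_of_nonneg_right (hw2.trans hgg) hsl.le
          linarith [this]
        have h6 : a * w ^ 2 * Real.sqrt (2 * ℓ) ≤ 2 * (b * u) * (g (j + 1) - g (j + 2)) := by
          calc a * w ^ 2 * Real.sqrt (2 * ℓ) ≤
              2 * (Real.sqrt (2 * ℓ) * g (j + 1)) * (g (j + 1) - g (j + 2)) := h5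
            _ ≤ 2 * (b * u) * (g (j + 1) - g (j + 2)) := by
                apply mul_le_mul_of_nonneg_right _ hgd
                linarith [hgs]
        -- multiply both sides by sqrt(2/ℓ) / (2a)
        have hsl2 : 0 ≤ Real.sqrt (2 / ℓ) := Real.sqrt_nonneg _
        have h7 := mul_le_mul_of_nonneg_right h6 hsl2
        rw [show a * w ^ 2 * Real.sqrt (2 * ℓ) * Real.sqrt (2 / ℓ)
            = a * w ^ 2 * (Real.sqrt (2 / ℓ) * Real.sqrt (2 * ℓ)) by ring, h2l] at h7
        -- h7 : a * w^2 * 2 ≤ 2 * (b*u) * (g1 - g2) * sqrt(2/ℓ)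
        have h8 : w ^ 2 ≤ (b * u) * (g (j + 1) - g (j + 2)) * Real.sqrt (2 / ℓ) / a := by
          rw [le_div_iff₀ ha]; linarith [h7]
        calc w ^ 2 ≤ (b * u) * (g (j + 1) - g (j + 2)) * Real.sqrt (2 / ℓ) / a := h8
          _ = u * ((b / a) * Real.sqrt (2 / ℓ) * (g (j + 1) - g (j + 2))) := by
              field_simp
      have := amgm_aux (norm_nonneg _) (norm_nonneg _)
        (by positivity : (0:ℝ) ≤ (b / a) * Real.sqrt (2 / ℓ) * (g (j + 1) - g (j + 2))) hmain
      simp only [hcdef]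
      linarith [this]
  -- telescoping sum bound
  have hsum : ∀ k N, (∑ j ∈ Finset.Icc (k + 1) (k + N), ‖x (j + 1) - x j‖) + ‖x (k + N + 1) - x (k + N)‖
      ≤ ‖x (k + 1) - x k‖ + c * (g (k + 1) - g (k + N + 1)) := by
    intro k N
    induction N with
    | zero => simp
    | succ n ih =>
      have hle : k + 1 ≤ k + n + 1 := by omega
      have e1 : k + (n + 1) = (k + n) + 1 := by omega
      rw [e1, Finset.sum_Icc_succ_top hle]
      have hh := hhalf (k + n)
      have e2 : k + n + 2 = k + n + 1 + 1 := by omega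
      rw [← e2]
      linarith [ih, hh]
  have hdist : ∀ k N, ‖x (k + 1) - x (k + N + 1)‖ ≤
      ∑ j ∈ Finset.Icc (k + 1) (k + N), ‖x (j + 1) - x j‖ := by
    intro k N
    induction N with
    | zero => simp
    | succ n ih =>
      have hle : k + 1 ≤ k + n + 1 := by omega
      have e1 : k + (n + 1) = (k + n) + 1 := by omega
      rw [e1, Finset.sum_Icc_succ_top hle]
      calc ‖x (k + 1) - x (k + n + 1 + 1)‖
          ≤ ‖x (k + 1) - x (k + n + 1)‖ + ‖x (k + n + 1) - x (k + n + 1 + 1)‖ :=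
            norm_sub_le_norm_sub_add_norm_sub _ _ _
        _ ≤ (∑ j ∈ Finset.Icc (k + 1) (k + n), ‖x (j + 1) - x j‖)
            + ‖x (k + n + 1 + 1) - x (k + n + 1)‖ := by
            rw [norm_sub_rev (x (k + n + 1))]; linarith [ih]
  have hB : ∀ k N, ‖x (k + 1) - x (k + N + 1)‖ ≤ ‖x (k + 1) - x k‖ + c * g (k + 1) := by
    intro k N
    have h1 := hdist k N
    have h2 := hsum k N
    have h3 : 0 ≤ c * g (k + N + 1) := mul_nonneg hc0 (hg0 _)
    have h4 : 0 ≤ ‖x (k + N + 1) - x (k + N)‖ := norm_nonneg _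
    nlinarith [h1, h2]
  -- Cauchy and limit
  have hcauchy : CauchySeq x := by
    apply cauchySeq_of_le_geometric θ s0 hθ1
    intro n
    rw [dist_eq_norm, norm_sub_rev]
    exact hstep n
  obtain ⟨xstar, hxconv⟩ := cauchySeq_tendsto_of_complete hcauchy
  -- r tends to 0
  have hrtend : Tendsto r atTop (nhds 0) := by
    have h1 : Tendsto (fun k : ℕ => r 0 * (q⁻¹) ^ k) atTop (nhds 0) := by
      have := (tendsto_pow_atTop_nhds_zero_of_lt_one (by positivity : (0:ℝ) ≤ q⁻¹)
        (inv_lt_one_of_one_lt₀ hq1)).const_mul (r 0)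
      simpa using this
    apply squeeze_zero hr0 _ h1
    intro k
    calc r k ≤ r 0 / q ^ k := hgeo k
      _ = r 0 * (q⁻¹) ^ k := by rw [inv_pow, div_eq_mul_inv]
  -- xstar is a minimizer
  have hxmin : xstar ∈ argminSet f := by
    intro y
    have hfle : f xstar ≤ 0 := by
      by_contra hpos
      push_neg at hpos
      obtain ⟨c0, hc1, hc2⟩ := exists_between hpos
      have hc0top : c0 ≠ ⊤ := hc2.ne_top
      have hc0bot : c0 ≠ ⊥ := by
        intro h; rw [h] at hc1; exact (not_lt_bot hc1)
      set ε : ℝ := c0.toReal with hεdef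
      have hc0eq : ((ε : ℝ) : EReal) = c0 := EReal.coe_toReal hc0top hc0bot
      have hεpos : 0 < ε := by
        have := hc1
        rw [← hc0eq] at this
        exact_mod_cast this
      have hnear := hlsc xstar c0 hc2
      have hev1 : ∀ᶠ k in atTop, c0 < f (x k) := hxconv.eventually hnear
      have hev2 : ∀ᶠ k in atTop, r k < ε :=
        (hrtend.eventually (eventually_lt_nhds hεpos)) -- maybe wrong name
      obtain ⟨k, h1, h2⟩ := (hev1.and hev2).exists
      rw [hfeq k, ← hc0eq] at h1
      have : ε < r k := by exact_mod_cast h1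
      linarith
    exact le_trans hfle (hf0 y)
  refine ⟨xstar, hxmin, hxconv, hgeo, ?_⟩
  -- final rate bound
  intro k
  have hlimb : ‖x (k + 1) - xstar‖ ≤ ‖x (k + 1) - x k‖ + c * g (k + 1) := by
    have ht1 : Tendsto (fun N : ℕ => x (k + N + 1)) atTop (nhds xstar) := by
      apply hxconv.comp
      apply tendsto_atTop_atTop.mpr
      intro n; exact ⟨n, fun m hm => by omega⟩
    have ht2 : Tendsto (fun N : ℕ => ‖x (k + 1) - x (k + N + 1)‖) atTop
        (nhds ‖x (k + 1) - xstar‖) := ((tendsto_const_nhds.sub ht1).norm)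
    exact le_of_tendsto ht2 (Eventually.of_forall (hB k))
  -- constants
  have hE2 : 1 / (a * σ * Real.sqrt (1 + 1 / (2 * a * σ))) = Real.sqrt (2 / (a * σ * q)) := by
    have harg : (0:ℝ) ≤ 1 + 1 / (2 * a * σ) := by positivity
    apply sqrt_eq_of_sq_eq (by positivity) (Real.sqrt_nonneg _)
    simp only [mul_pow, div_pow, one_pow]
    rw [Real.sq_sqrt harg, Real.sq_sqrt (by positivity : (0:ℝ) ≤ 2/(a*σ*q))]
    simp only [hqdef]
    field_simp
    ring
  have hE1 : c * Real.sqrt (r 0) * θ = Real.sqrt (2 / (a * σ * q)) * s0 := by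
    apply sqrt_eq_of_sq_eq (by positivity) (by positivity)
    simp only [hcdef, hs0def, mul_pow, div_pow]
    rw [Real.sq_sqrt (by positivity : (0:ℝ) ≤ 2/ℓ),
      Real.sq_sqrt (hr0pos.le), hθsq, Real.sq_sqrt (by positivity : (0:ℝ) ≤ 2/(a*σ*q)),
      Real.sq_sqrt (by positivity : (0:ℝ) ≤ r 0 / a)]
    rw [hσ]
    field_simp
  have hrpow : q ^ ((k : ℝ) / 2) = sq ^ k := by
    rw [show (k:ℝ)/2 = (1/2) * k by ring, Real.rpow_mul hq0.le, Real.rpow_natCast,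
      ← Real.sqrt_eq_rpow, hsqdef]
  calc ‖x (k + 1) - xstar‖ ≤ ‖x (k + 1) - x k‖ + c * g (k + 1) := hlimb
    _ ≤ s0 * θ ^ k + c * (Real.sqrt (r 0) * θ ^ (k + 1)) := by
        have h1 := hstep k
        have h2 := mul_le_mul_of_nonneg_left (hgθ (k + 1)) hc0
        linarith
    _ = (1 + Real.sqrt (2 / (a * σ * q))) * s0 * θ ^ k := by
        have : c * (Real.sqrt (r 0) * θ ^ (k + 1)) = (c * Real.sqrt (r 0) * θ) * θ ^ k := by
          rw [pow_succ]; ring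
        rw [this, hE1]; ring
    _ = (1 + 1 / (a * σ * Real.sqrt (1 + 1 / (2 * a * σ)))) * s0 / q ^ ((k : ℝ) / 2) := by
        rw [hE2, hrpow, hθdef, inv_pow, ← div_eq_mul_inv]
  done
end
end

section
/- Complexity of the barycentric projection method for regular intersections: let m ≥ 2, let C₁, …, C_m be closed convex subsets of H with B(x̄, R) ⊆ C := ⋂_{i=1}^m C_i for some x̄ ∈ H and R > 0, let α₁, …, α_m > 0 with Σᵢ αᵢ = 1, set f(x) = ½ Σᵢ αᵢ·dist(x, C_i)², and define the sequence x_{k+1} = Σᵢ αᵢ·P_{C_i}(x_k) from a starting point x₀ ∈ H. Set M = ¼ (1 + 2‖x₀ − x̄‖/R)^{2−2m}·min_i αᵢ. Then (x_k) converges strongly to some x* ∈ C, and for all k: f(x_k) ≤ f(x₀)/(1 + M/4)^k (k ≥ 0), and ‖x_k − x*‖ ≤ [1 + 8/(M·√(1 + 4/M))] · √(2 f(x₀)) / (1 + M/4)^{(k−1)/2} (k ≥ 1). -/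
open Metric Set Filter

noncomputable section

local notation "⟪" x ", " y "⟫" => @inner ℝ _ _ x y

private lemma sqrt_pow_aux (q : ℝ) (hq : 0 ≤ q) (k : ℕ) :
    Real.sqrt (q ^ k) = (Real.sqrt q) ^ k := by
  induction k with
  | zero => simp
  | succ n ih => rw [pow_succ, pow_succ, Real.sqrt_mul (pow_nonneg hq n), ih]

set_option maxHeartbeats 2000000

/-- **Complexity of the barycentric projection method for regular
intersections**: `C₁,…,C_m` closed convex with `B(x̄,R) ⊆ C = ⋂ᵢ Cᵢ`, weights
`αᵢ > 0` summing to 1, `f(x) = ½ Σᵢ αᵢ dist(x,Cᵢ)²`, `P_{Cᵢ}` the metric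
projections, the sequence `x_{k+1} = Σᵢ αᵢ P_{Cᵢ}(x_k)`, and
`M = ¼(1 + 2‖x₀ − x̄‖/R)^{2−2m}·minᵢ αᵢ`.  Then `x_k` converges strongly to some
`x* ∈ C`, `f(x_k) ≤ f(x₀)/(1+M/4)^k` for `k ≥ 0`, and
`‖x_k − x*‖ ≤ [1 + 8/(M√(1+4/M))]·√(2f(x₀))/(1+M/4)^{(k−1)/2}` for `k ≥ 1`. -/
theorem stmt14 {H : Type*} [NormedAddCommGroup H] [InnerProductSpace ℝ H]
    [CompleteSpace H]
    (m : ℕ) (hm : 2 ≤ m) (C : Fin m → Set H)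
    (hclosed : ∀ i, IsClosed (C i)) (hconv : ∀ i, Convex ℝ (C i))
    (xbar : H) (R : ℝ) (hR : 0 < R)
    (hball : closedBall xbar R ⊆ ⋂ i, C i)
    (α : Fin m → ℝ) (hα : ∀ i, 0 < α i) (hαsum : ∑ i, α i = 1)
    (P : Fin m → H → H)
    (hP : ∀ i z, P i z ∈ C i ∧ ∀ y ∈ C i, ‖z - P i z‖ ≤ ‖z - y‖)
    (f : H → ℝ)
    (hf : ∀ x, f x = (1 / 2) * ∑ i, α i * Metric.infDist x (C i) ^ 2)
    (x : ℕ → H)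
    (hiter : ∀ k : ℕ, x (k + 1) = ∑ i, α i • P i (x k))
    (M : ℝ)
    (hM : M = (1 / 4) * (1 + 2 * ‖x 0 - xbar‖ / R) ^ ((2 : ℤ) - 2 * m) * ⨅ i, α i) :
    ∃ xstar ∈ ⋂ i, C i, Tendsto x atTop (nhds xstar) ∧
      (∀ k : ℕ, f (x k) ≤ f (x 0) / (1 + M / 4) ^ k) ∧
      ∀ k : ℕ, 1 ≤ k → ‖x k - xstar‖ ≤
        (1 + 8 / (M * Real.sqrt (1 + 4 / M))) * Real.sqrt (2 * f (x 0)) /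
          (1 + M / 4) ^ (((k : ℝ) - 1) / 2) := by
  have hmne : Nonempty (Fin m) := ⟨⟨0, by omega⟩⟩
  have hxbarC : xbar ∈ ⋂ i, C i := hball (Metric.mem_closedBall_self hR.le)
  have hxbarCi : ∀ i, xbar ∈ C i := fun i => Set.mem_iInter.mp hxbarC i
  have hCne : ∀ i, (C i).Nonempty := fun i => ⟨xbar, hxbarCi i⟩
  -- distance to `C i` is realized by `P i`
  have d_eq : ∀ i z, Metric.infDist z (C i) = ‖z - P i z‖ := by
    intro i z
    refine le_antisymm ?_ ?_
    · rw [← dist_eq_norm]; exact Metric.infDist_le_dist_of_mem (hP i z).1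
    · rw [Metric.infDist_eq_iInf]
      have : Nonempty (C i) := (hCne i).to_subtype
      refine le_ciInf fun w => ?_
      rw [dist_eq_norm]; exact (hP i z).2 w w.2
  -- variational inequality
  have hvar : ∀ i z, ∀ y ∈ C i, ⟪z - P i z, y - P i z⟫ ≤ 0 := by
    intro i z
    have h1 : ‖z - P i z‖ = ⨅ w : C i, ‖z - w‖ := by
      have : Nonempty (C i) := (hCne i).to_subtype
      refine le_antisymm (le_ciInf fun w => (hP i z).2 w w.2) ?_
      have hb : BddBelow (Set.range fun w : C i => ‖z - (w : H)‖) :=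
        ⟨0, by rintro b ⟨w, rfl⟩; exact norm_nonneg _⟩
      exact ciInf_le hb ⟨P i z, (hP i z).1⟩
    exact (norm_eq_iInf_iff_real_inner_le_zero (hconv i) (hP i z).1).mp h1
  have h2f : ∀ y, 2 * f y = ∑ i, α i * ‖y - P i y‖ ^ 2 := by
    intro y
    rw [hf y,
      show (2 : ℝ) * (1 / 2 * ∑ i, α i * Metric.infDist y (C i) ^ 2)
        = ∑ i, α i * Metric.infDist y (C i) ^ 2 by ring]
    exact Finset.sum_congr rfl fun i _ => by rw [d_eq]
  have hfnn : ∀ y, 0 ≤ f y := by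
    intro y
    rw [hf y]
    have : 0 ≤ ∑ i, α i * Metric.infDist y (C i) ^ 2 :=
      Finset.sum_nonneg fun i _ => mul_nonneg (hα i).le (sq_nonneg _)
    linarith
  -- the displacement
  set G : ℕ → H := fun k => ∑ i, α i • (x k - P i (x k)) with hGdef
  have hGiter : ∀ k, x (k + 1) = x k - G k := by
    intro k
    rw [hiter k, hGdef]
    simp only [smul_sub]
    rw [Finset.sum_sub_distrib, ← Finset.sum_smul, hαsum, one_smul]
    abel
  -- inner product expansions
  have hGinner : ∀ k (w : H), ⟪G k, w⟫ = ∑ i, α i * ⟪x k - P i (x k), w⟫ := by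
    intro k w
    rw [hGdef]
    rw [sum_inner]
    exact Finset.sum_congr rfl fun i _ => real_inner_smul_left _ _ _
  have hGsq : ∀ k, ‖G k‖ ^ 2 = ∑ i, α i * ⟪x k - P i (x k), G k⟫ := by
    intro k
    rw [← real_inner_self_eq_norm_sq, hGinner]
  -- ⟪G k, x k - y⟫ ≥ 2 f (x k) for y ∈ C
  have hinner : ∀ k, ∀ y ∈ ⋂ i, C i, 2 * f (x k) ≤ ⟪G k, x k - y⟫ := by
    intro k y hy
    rw [h2f, hGinner]
    refine Finset.sum_le_sum fun i _ => ?_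
    have hyi : y ∈ C i := Set.mem_iInter.mp hy i
    have h1 : ⟪x k - P i (x k), x k - y⟫
        = ‖x k - P i (x k)‖ ^ 2 - ⟪x k - P i (x k), y - P i (x k)⟫ := by
      rw [← real_inner_self_eq_norm_sq, ← inner_sub_right]
      congr 1
      abel
    have h2 := hvar i (x k) y hyi
    have h3 : ‖x k - P i (x k)‖ ^ 2 ≤ ⟪x k - P i (x k), x k - y⟫ := by
      rw [h1]; linarith
    exact mul_le_mul_of_nonneg_left h3 (hα i).le
  -- ‖G k‖² ≤ 2 f (x k)
  have hGle : ∀ k, ‖G k‖ ^ 2 ≤ 2 * f (x k) := by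
    intro k
    have h1 : ∑ i, α i * ⟪x k - P i (x k), G k⟫
        ≤ (∑ i, α i * ‖x k - P i (x k)‖ ^ 2) / 2 + ‖G k‖ ^ 2 / 2 := by
      have h2 : ∀ i ∈ Finset.univ, α i * ⟪x k - P i (x k), G k⟫
          ≤ α i * (‖x k - P i (x k)‖ ^ 2 / 2 + ‖G k‖ ^ 2 / 2) := by
        intro i _
        refine mul_le_mul_of_nonneg_left ?_ (hα i).le
        have h3 := real_inner_le_norm (x k - P i (x k)) (G k)
        nlinarith [sq_nonneg (‖x k - P i (x k)‖ - ‖G k‖)]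
      calc ∑ i, α i * ⟪x k - P i (x k), G k⟫
          ≤ ∑ i, α i * (‖x k - P i (x k)‖ ^ 2 / 2 + ‖G k‖ ^ 2 / 2) :=
            Finset.sum_le_sum h2
        _ = (∑ i, α i * ‖x k - P i (x k)‖ ^ 2) / 2 + (∑ i, α i) * (‖G k‖ ^ 2 / 2) := by
            rw [Finset.sum_mul, Finset.sum_div, ← Finset.sum_add_distrib]
            exact Finset.sum_congr rfl fun i _ => by ring
        _ = (∑ i, α i * ‖x k - P i (x k)‖ ^ 2) / 2 + ‖G k‖ ^ 2 / 2 := by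
            rw [hαsum]; ring
    have h4 := hGsq k
    have h5 := h2f (x k)
    linarith
  -- descent
  have hdescent : ∀ k, f (x (k + 1)) ≤ f (x k) - ‖G k‖ ^ 2 / 2 := by
    intro k
    have e2 : ∑ i, α i * ‖x (k + 1) - P i (x k)‖ ^ 2 = 2 * f (x k) - ‖G k‖ ^ 2 := by
      have e1 : ∀ i, ‖x (k + 1) - P i (x k)‖ ^ 2
          = ‖x k - P i (x k)‖ ^ 2 - 2 * ⟪x k - P i (x k), G k⟫ + ‖G k‖ ^ 2 := by
        intro i
        rw [hGiter k]
        have h : x k - G k - P i (x k) = (x k - P i (x k)) - G k := by abel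
        rw [h, norm_sub_sq_real]
      calc ∑ i, α i * ‖x (k + 1) - P i (x k)‖ ^ 2
          = (∑ i, α i * ‖x k - P i (x k)‖ ^ 2)
            - 2 * (∑ i, α i * ⟪x k - P i (x k), G k⟫) + (∑ i, α i) * ‖G k‖ ^ 2 := by
            rw [Finset.sum_mul, Finset.mul_sum, ← Finset.sum_sub_distrib,
              ← Finset.sum_add_distrib]
            exact Finset.sum_congr rfl fun i _ => by rw [e1 i]; ring
        _ = 2 * f (x k) - ‖G k‖ ^ 2 := by
            rw [← hGsq, ← h2f, hαsum]; ring
    have e3 : 2 * f (x (k + 1)) ≤ ∑ i, α i * ‖x (k + 1) - P i (x k)‖ ^ 2 := by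
      rw [h2f]
      refine Finset.sum_le_sum fun i _ => ?_
      refine mul_le_mul_of_nonneg_left ?_ (hα i).le
      exact pow_le_pow_left₀ (norm_nonneg _) ((hP i (x (k + 1))).2 _ (hP i (x k)).1) 2
    linarith
  -- Fejér monotonicity
  have hfejer : ∀ k, ∀ y ∈ ⋂ i, C i, ‖x (k + 1) - y‖ ≤ ‖x k - y‖ := by
    intro k y hy
    have h1 : ‖x (k + 1) - y‖ ^ 2 ≤ ‖x k - y‖ ^ 2 := by
      have h2 : x (k + 1) - y = (x k - y) - G k := by rw [hGiter k]; abel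
      rw [h2, norm_sub_sq_real]
      have h3 := hinner k y hy
      have h4 := hGle k
      have h5 : ⟪x k - y, G k⟫ = ⟪G k, x k - y⟫ := real_inner_comm _ _
      have h6 := hfnn (x k)
      linarith
    have := Real.sqrt_le_sqrt h1
    rwa [Real.sqrt_sq (norm_nonneg _), Real.sqrt_sq (norm_nonneg _)] at this
  have hfejer' : ∀ y ∈ ⋂ i, C i, ∀ k j, k ≤ j → ‖x j - y‖ ≤ ‖x k - y‖ := by
    intro y hy k j hkj
    induction j, hkj using Nat.le_induction with
    | base => exact le_refl _
    | succ n hn ih => exact le_trans (hfejer n y hy) ih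
  have hmono : ∀ k, ‖x k - xbar‖ ≤ ‖x 0 - xbar‖ := fun k =>
    hfejer' xbar hxbarC 0 k (Nat.zero_le k)
  -- constants
  set a : ℝ := ⨅ i, α i with ha_def
  have hbdd : BddBelow (Set.range α) := (Set.finite_range α).bddBelow
  have ha_le : ∀ i, a ≤ α i := fun i => ciInf_le hbdd i
  have ha_pos : 0 < a := by
    obtain ⟨i₀, hi₀⟩ := Finite.exists_min α
    have : a = α i₀ := le_antisymm (ha_le i₀) (le_ciInf hi₀)
    rw [this]; exact hα i₀
  set D : ℝ := 1 + 2 * ‖x 0 - xbar‖ / R with hD_def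
  have hD1 : 1 ≤ D := by
    have : 0 ≤ 2 * ‖x 0 - xbar‖ / R := by positivity
    rw [hD_def]; linarith
  have hD0 : 0 < D := lt_of_lt_of_le one_pos hD1
  set K : ℝ := D ^ (m - 1) with hK_def
  have hK1 : 1 ≤ K := one_le_pow₀ hD1
  have hK0 : 0 < K := lt_of_lt_of_le one_pos hK1
  have hDK : D ≤ K := by
    rw [hK_def]
    exact le_self_pow₀ hD1 (by omega)
  have hMK : M = a / (4 * K ^ 2) := by
    rw [hM, hK_def]
    have h1 : ((2 : ℤ) - 2 * m) = -((2 * (m - 1) : ℕ) : ℤ) := by push_cast; omega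
    rw [h1, zpow_neg, zpow_natCast]
    have h2 : D ^ (2 * (m - 1)) = (D ^ (m - 1)) ^ 2 := by rw [← pow_mul, mul_comm]
    rw [h2]
    field_simp
  have hM0 : 0 < M := by rw [hMK]; positivity
  -- each projection is close when f is small
  have hdist : ∀ k i, ‖x k - P i (x k)‖ ≤ Real.sqrt (2 * f (x k) / a) := by
    intro k i
    have h1 : α i * ‖x k - P i (x k)‖ ^ 2 ≤ 2 * f (x k) := by
      rw [h2f]
      exact Finset.single_le_sum (f := fun j => α j * ‖x k - P j (x k)‖ ^ 2)
        (fun j _ => mul_nonneg (hα j).le (sq_nonneg _)) (Finset.mem_univ i)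
    have h2 : ‖x k - P i (x k)‖ ^ 2 ≤ 2 * f (x k) / a := by
      rw [le_div_iff₀ ha_pos]
      nlinarith [ha_le i, sq_nonneg ‖x k - P i (x k)‖]
    calc ‖x k - P i (x k)‖ = Real.sqrt (‖x k - P i (x k)‖ ^ 2) :=
          (Real.sqrt_sq (norm_nonneg _)).symm
      _ ≤ Real.sqrt (2 * f (x k) / a) := Real.sqrt_le_sqrt h2
  -- regularity: good point of the intersection near x k
  have hreg : ∀ k, ∃ z ∈ ⋂ i, C i, ‖x k - z‖ ≤ K * Real.sqrt (2 * f (x k) / a) := by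
    intro k
    set ε := Real.sqrt (2 * f (x k) / a) with hε_def
    have hεnn : 0 ≤ ε := Real.sqrt_nonneg _
    have hd : ∀ i, ‖x k - P i (x k)‖ ≤ ε := fun i => by rw [hε_def]; exact hdist k i
    by_cases hε0 : ε = 0
    · refine ⟨x k, ?_, ?_⟩
      · rw [Set.mem_iInter]
        intro i
        have h4 : ‖x k - P i (x k)‖ = 0 :=
          le_antisymm (hε0 ▸ hd i) (norm_nonneg _)
        have h3 : x k = P i (x k) := by
          have := norm_sub_eq_zero_iff.mp h4
          exact this
        rw [h3]; exact (hP i (x k)).1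
      · have h5 : ‖x k - x k‖ = 0 := by simp
        rw [h5]
        positivity
    · have hεpos : 0 < ε := lt_of_le_of_ne hεnn (Ne.symm hε0)
      have hεR : 0 < ε + R := by linarith
      set lam := ε / (ε + R) with hlam_def
      have hlam_pos : 0 < lam := div_pos hεpos hεR
      have hlam_le1 : lam ≤ 1 := by rw [hlam_def, div_le_one hεR]; linarith
      refine ⟨x k + lam • (xbar - x k), ?_, ?_⟩
      · rw [Set.mem_iInter]
        intro i
        have hwC : xbar + ((1 - lam) / lam) • (x k - P i (x k)) ∈ C i := by
          refine Set.mem_iInter.mp (hball ?_) i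
          rw [Metric.mem_closedBall, dist_eq_norm, add_sub_cancel_left, norm_smul,
            Real.norm_eq_abs]
          have h6 : (1 - lam) / lam = R / ε := by
            rw [hlam_def]
            field_simp
            ring
          rw [h6, abs_of_nonneg (by positivity)]
          calc R / ε * ‖x k - P i (x k)‖ ≤ R / ε * ε :=
                mul_le_mul_of_nonneg_left (hd i) (by positivity)
            _ = R := by field_simp
        have h7 := (hconv i) (hP i (x k)).1 hwC
          (by linarith : (0:ℝ) ≤ 1 - lam) hlam_pos.le (by ring)
        have h8 : (1 - lam) • P i (x k)
            + lam • (xbar + ((1 - lam) / lam) • (x k - P i (x k)))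
            = x k + lam • (xbar - x k) := by
          rw [smul_add, smul_smul]
          have h9 : lam * ((1 - lam) / lam) = 1 - lam := by field_simp
          rw [h9]
          module
        rwa [h8] at h7
      · have h10 : x k - (x k + lam • (xbar - x k)) = lam • (x k - xbar) := by module
        rw [h10, norm_smul, Real.norm_eq_abs, abs_of_nonneg hlam_pos.le]
        have h11 : lam ≤ ε / R := by
          rw [hlam_def, div_le_div_iff₀ hεR hR]
          nlinarith [hεnn]
        have h12 : ‖x 0 - xbar‖ / R ≤ D := by
          have ht : 0 ≤ ‖x 0 - xbar‖ / R := by positivity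
          have ht2 : 2 * ‖x 0 - xbar‖ / R = 2 * (‖x 0 - xbar‖ / R) := by ring
          rw [hD_def, ht2]
          linarith
        calc lam * ‖x k - xbar‖ ≤ (ε / R) * ‖x 0 - xbar‖ :=
              mul_le_mul h11 (hmono k) (norm_nonneg _) (div_nonneg hεnn hR.le)
          _ = ε * (‖x 0 - xbar‖ / R) := by ring
          _ ≤ ε * D := mul_le_mul_of_nonneg_left h12 hεnn
          _ ≤ ε * K := mul_le_mul_of_nonneg_left hDK hεnn
          _ = K * ε := mul_comm _ _
  -- geometric decay of f along the iterates
  have hB1 : (1:ℝ) < 1 + M / 4 := by linarith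
  have hB0 : (0:ℝ) < 1 + M / 4 := by linarith
  set q : ℝ := 1 / (1 + M / 4) with hq_def
  have hq0 : 0 < q := by rw [hq_def]; positivity
  have hq1 : q < 1 := by rw [hq_def, div_lt_one hB0]; linarith
  have hKne : K ≠ 0 := ne_of_gt hK0
  have hane : a ≠ 0 := ne_of_gt ha_pos
  have hrate1 : ∀ k, f (x (k + 1)) ≤ (1 - 4 * M) * f (x k) := by
    intro k
    obtain ⟨z, hzC, hzle⟩ := hreg k
    have hGge : 8 * M * f (x k) ≤ ‖G k‖ ^ 2 := by
      rcases le_or_gt (f (x k)) 0 with hf0 | hf0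
      · have hfz : f (x k) = 0 := le_antisymm hf0 (hfnn (x k))
        rw [hfz]
        simpa using sq_nonneg ‖G k‖
      · set s := Real.sqrt (2 * f (x k) / a) with hs_def
        have hs0 : 0 < s := Real.sqrt_pos.mpr (by positivity)
        have hεsq : s ^ 2 = 2 * f (x k) / a := Real.sq_sqrt (by positivity)
        have h1 : 2 * f (x k) ≤ ‖G k‖ * (K * s) := by
          calc 2 * f (x k) ≤ ⟪G k, x k - z⟫ := hinner k z hzC
            _ ≤ ‖G k‖ * ‖x k - z‖ := real_inner_le_norm _ _
            _ ≤ ‖G k‖ * (K * s) :=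
                mul_le_mul_of_nonneg_left hzle (norm_nonneg _)
        have hfne : f (x k) ≠ 0 := ne_of_gt hf0
        have h2 : 2 * f (x k) / (K * s) ≤ ‖G k‖ := by
          rw [div_le_iff₀ (by positivity)]
          linarith
        have h3 : (2 * f (x k) / (K * s)) ^ 2 ≤ ‖G k‖ ^ 2 :=
          pow_le_pow_left₀ (by positivity) h2 2
        have h4 : (2 * f (x k) / (K * s)) ^ 2 = 8 * M * f (x k) := by
          rw [div_pow, mul_pow K s, hεsq, hMK]
          have hsne : s ≠ 0 := ne_of_gt hs0
          field_simp
          ring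
        rw [h4] at h3
        exact h3
    have hd := hdescent k
    linarith
  have h14q : 1 - 4 * M ≤ q := by
    rw [hq_def, le_div_iff₀ hB0]
    nlinarith [hM0]
  have hrate : ∀ k, f (x k) ≤ f (x 0) * q ^ k := by
    intro k
    induction k with
    | zero => simpa using le_refl (f (x 0))
    | succ n ih =>
      have h1 := hrate1 n
      have h2 : (1 - 4 * M) * f (x n) ≤ q * f (x n) :=
        mul_le_mul_of_nonneg_right h14q (hfnn _)
      calc f (x (n + 1)) ≤ q * f (x n) := le_trans h1 h2
        _ ≤ q * (f (x 0) * q ^ n) := mul_le_mul_of_nonneg_left ih hq0.le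
        _ = f (x 0) * q ^ (n + 1) := by ring
  have hconc1 : ∀ k, f (x k) ≤ f (x 0) / (1 + M / 4) ^ k := by
    intro k
    have h := hrate k
    rw [hq_def, div_pow, one_pow, mul_one_div] at h
    exact h
  -- the sequence is Cauchy
  set S : ℝ := Real.sqrt (2 * f (x 0)) with hS_def
  set rq : ℝ := Real.sqrt q with hrq_def
  have hrqnn : 0 ≤ rq := Real.sqrt_nonneg _
  have hrq1 : rq < 1 := by
    rw [hrq_def, ← Real.sqrt_one]
    exact Real.sqrt_lt_sqrt hq0.le hq1
  have hsqf : ∀ k, Real.sqrt (2 * f (x k)) ≤ S * rq ^ k := by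
    intro k
    have h1 : 2 * f (x k) ≤ 2 * f (x 0) * q ^ k := by linarith [hrate k]
    calc Real.sqrt (2 * f (x k)) ≤ Real.sqrt (2 * f (x 0) * q ^ k) :=
          Real.sqrt_le_sqrt h1
      _ = S * rq ^ k := by
          rw [Real.sqrt_mul (by linarith [hfnn (x 0)]), sqrt_pow_aux q hq0.le, hS_def,
            hrq_def]
  have hstep : ∀ k, dist (x k) (x (k + 1)) ≤ S * rq ^ k := by
    intro k
    have h1 : x k - x (k + 1) = G k := by rw [hGiter k]; abel
    rw [dist_eq_norm, h1]
    calc ‖G k‖ = Real.sqrt (‖G k‖ ^ 2) := (Real.sqrt_sq (norm_nonneg _)).symm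
      _ ≤ Real.sqrt (2 * f (x k)) := Real.sqrt_le_sqrt (hGle k)
      _ ≤ S * rq ^ k := hsqf k
  have hcauchy : CauchySeq x := cauchySeq_of_le_geometric rq S hrq1 hstep
  obtain ⟨xstar, hxstar⟩ := cauchySeq_tendsto_of_complete hcauchy
  -- the limit is in the intersection
  have hxstarC : xstar ∈ ⋂ i, C i := by
    rw [Set.mem_iInter]
    intro i
    have h0 : Tendsto (fun k => Metric.infDist (x k) (C i)) atTop (nhds 0) := by
      have hb : ∀ k, Metric.infDist (x k) (C i) ≤ (Real.sqrt (1 / a) * S) * rq ^ k := by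
        intro k
        have h1 : Metric.infDist (x k) (C i) ≤ Real.sqrt (2 * f (x k) / a) := by
          rw [d_eq]
          exact hdist k i
        have h2 : Real.sqrt (2 * f (x k) / a) = Real.sqrt (1 / a) * Real.sqrt (2 * f (x k)) := by
          rw [← Real.sqrt_mul (by positivity)]
          congr 1
          field_simp
        have h3 : Real.sqrt (1 / a) * Real.sqrt (2 * f (x k))
            ≤ Real.sqrt (1 / a) * (S * rq ^ k) :=
          mul_le_mul_of_nonneg_left (hsqf k) (Real.sqrt_nonneg _)
        calc Metric.infDist (x k) (C i) ≤ Real.sqrt (2 * f (x k) / a) := h1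
          _ = Real.sqrt (1 / a) * Real.sqrt (2 * f (x k)) := h2
          _ ≤ Real.sqrt (1 / a) * (S * rq ^ k) := h3
          _ = (Real.sqrt (1 / a) * S) * rq ^ k := by ring
      have hgeo : Tendsto (fun k : ℕ => (Real.sqrt (1 / a) * S) * rq ^ k) atTop (nhds 0) := by
        have := (tendsto_pow_atTop_nhds_zero_of_lt_one hrqnn hrq1).const_mul
          (Real.sqrt (1 / a) * S)
        simpa using this
      exact squeeze_zero (fun k => Metric.infDist_nonneg) hb hgeo
    have h1 : Tendsto (fun k => Metric.infDist (x k) (C i)) atTop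
        (nhds (Metric.infDist xstar (C i))) :=
      ((continuous_infDist_pt (C i)).tendsto xstar).comp hxstar
    have h2 : Metric.infDist xstar (C i) = 0 := tendsto_nhds_unique h1 h0
    exact ((hclosed i).mem_iff_infDist_zero (hCne i)).mpr h2
  -- distance from the iterates to the limit
  have hfinal : ∀ k, ‖x k - xstar‖ ≤ 2 * K * Real.sqrt (2 * f (x k) / a) := by
    intro k
    obtain ⟨z, hzC, hzle⟩ := hreg k
    have h1 : ∀ j, k ≤ j → ‖x j - z‖ ≤ ‖x k - z‖ := fun j hkj => hfejer' z hzC k j hkj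
    have h2 : Tendsto (fun j => ‖x j - z‖) atTop (nhds ‖xstar - z‖) := by
      have hc : Continuous fun y : H => ‖y - z‖ := (continuous_id.sub continuous_const).norm
      exact (hc.tendsto xstar).comp hxstar
    have h3 : ‖xstar - z‖ ≤ ‖x k - z‖ := le_of_tendsto h2 (eventually_atTop.mpr ⟨k, h1⟩)
    have h4 := dist_triangle (x k) z xstar
    rw [dist_eq_norm, dist_eq_norm, dist_eq_norm] at h4
    have h5 : ‖z - xstar‖ = ‖xstar - z‖ := norm_sub_rev _ _
    linarith
  -- the constant
  have hsqrtM : Real.sqrt M = Real.sqrt a / (2 * K) := by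
    rw [hMK, show (4 : ℝ) * K ^ 2 = (2 * K) ^ 2 by ring, Real.sqrt_div ha_pos.le,
      Real.sqrt_sq (by positivity)]
  have hsM0 : 0 < Real.sqrt M := Real.sqrt_pos.mpr hM0
  have hT : 2 * K / Real.sqrt a = 1 / Real.sqrt M := by
    rw [hsqrtM]
    have hsa : 0 < Real.sqrt a := Real.sqrt_pos.mpr ha_pos
    field_simp
  -- final coefficient comparison
  have hcoefsqrt : M * Real.sqrt (1 + 4 / M) = Real.sqrt (M * (M + 4)) := by
    rw [show (1 + 4 / M) = (M * (M + 4)) / M ^ 2 by field_simp,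
      Real.sqrt_div (by positivity), Real.sqrt_sq hM0.le]
    field_simp
  have hsMM4 : 0 < Real.sqrt (M * (M + 4)) := Real.sqrt_pos.mpr (by positivity)
  have hTB : (1 / Real.sqrt M) * (1 + M / 4) ^ (-(1:ℝ)/2)
      ≤ 1 + 8 / (M * Real.sqrt (1 + 4 / M)) := by
    have h1 : (1 + M / 4 : ℝ) ^ (-(1:ℝ)/2) = 1 / Real.sqrt (1 + M / 4) := by
      rw [show (-(1:ℝ)/2) = -(1/2 : ℝ) by norm_num, Real.rpow_neg hB0.le, ← Real.sqrt_eq_rpow,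
        one_div]
    have h2 : Real.sqrt M * Real.sqrt (1 + M / 4) = Real.sqrt (M * (M + 4)) / 2 := by
      rw [← Real.sqrt_mul hM0.le, show M * (1 + M / 4) = (M * (M + 4)) / 4 by ring,
        Real.sqrt_div (by positivity),
        show Real.sqrt 4 = 2 by
          rw [show (4:ℝ) = 2 ^ 2 by norm_num]
          exact Real.sqrt_sq (by norm_num)]
    rw [h1, hcoefsqrt]
    have hsB : 0 < Real.sqrt (1 + M / 4) := Real.sqrt_pos.mpr hB0
    have h3 : 1 / Real.sqrt M * (1 / Real.sqrt (1 + M / 4))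
        = 2 / Real.sqrt (M * (M + 4)) := by
      rw [div_mul_div_comm, one_mul, h2, one_div_div]
    rw [h3]
    have h4 : 2 / Real.sqrt (M * (M + 4)) ≤ 8 / Real.sqrt (M * (M + 4)) :=
      (div_le_div_iff_of_pos_right hsMM4).mpr (by norm_num)
    linarith
  refine ⟨xstar, hxstarC, hxstar, hconc1, ?_⟩
  intro k hk
  have h1 := hfinal k
  have h2 : 2 * K * Real.sqrt (2 * f (x k) / a) ≤ (1 / Real.sqrt M) * (S * rq ^ k) := by
    rw [Real.sqrt_div (by linarith [hfnn (x k)] : (0:ℝ) ≤ 2 * f (x k))]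
    have h3 : 2 * K * (Real.sqrt (2 * f (x k)) / Real.sqrt a)
        = (2 * K / Real.sqrt a) * Real.sqrt (2 * f (x k)) := by ring
    rw [h3, hT]
    exact mul_le_mul_of_nonneg_left (hsqf k) (by positivity)
  have hrq_eq : rq = (1 + M / 4 : ℝ) ^ (-(1:ℝ)/2) := by
    rw [hrq_def, hq_def, one_div, Real.sqrt_eq_rpow, Real.inv_rpow hB0.le,
      ← Real.rpow_neg hB0.le]
    norm_num
  have h4 : (1 / Real.sqrt M) * (S * rq ^ k)
      ≤ (1 + 8 / (M * Real.sqrt (1 + 4 / M))) * S / (1 + M / 4) ^ (((k:ℝ) - 1) / 2) := by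
    have hrqk : rq ^ k = (1 + M / 4 : ℝ) ^ ((-(1:ℝ)/2) * (k:ℝ)) := by
      rw [hrq_eq, ← Real.rpow_natCast ((1 + M / 4 : ℝ) ^ (-(1:ℝ)/2)) k,
        ← Real.rpow_mul hB0.le]
    have hsplit : ((-(1:ℝ)/2) * (k:ℝ)) = (-(1:ℝ)/2) + (-(((k:ℝ) - 1) / 2)) := by ring
    have hrqk2 : rq ^ k = (1 + M / 4 : ℝ) ^ (-(1:ℝ)/2)
        * (1 + M / 4 : ℝ) ^ (-(((k:ℝ) - 1) / 2)) := by
      rw [hrqk, hsplit, Real.rpow_add hB0]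
    have hBp : 0 ≤ (1 + M / 4 : ℝ) ^ (-(((k:ℝ) - 1) / 2)) := (Real.rpow_pos_of_pos hB0 _).le
    have hS0 : 0 ≤ S := Real.sqrt_nonneg _
    calc (1 / Real.sqrt M) * (S * rq ^ k)
        = ((1 / Real.sqrt M) * (1 + M / 4 : ℝ) ^ (-(1:ℝ)/2)) * S
            * (1 + M / 4 : ℝ) ^ (-(((k:ℝ) - 1) / 2)) := by rw [hrqk2]; ring
      _ ≤ (1 + 8 / (M * Real.sqrt (1 + 4 / M))) * S
            * (1 + M / 4 : ℝ) ^ (-(((k:ℝ) - 1) / 2)) :=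
          mul_le_mul_of_nonneg_right (mul_le_mul_of_nonneg_right hTB hS0) hBp
      _ = (1 + 8 / (M * Real.sqrt (1 + 4 / M))) * S / (1 + M / 4) ^ (((k:ℝ) - 1) / 2) := by
          rw [Real.rpow_neg hB0.le]
          ring
  linarith
end
end

section
/- Globalization of the KL inequality for convex functions (Proposition 6.3): let r₀ > 0 and φ ∈ 𝒦(0,r₀), and assume φ′(f(x))·‖∂⁰f(x)‖ ≥ 1 for every x with 0 < f(x) < r₀. Fix r₁ ∈ (0,r₀) and define φ̂ : [0,∞) → ℝ by φ̂(r) = φ(r) for r ≤ r₁ and φ̂(r) = φ(r₁) + (r − r₁)·φ′(r₁) for r ≥ r₁. Then φ̂ is desingularizing for f on all of H: φ̂′(f(x))·‖∂⁰f(x)‖ ≥ 1 for every x ∈ H with f(x) > 0 (where φ̂′(r) = φ′(r₁) for r ≥ r₁). -/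
set_option maxHeartbeats 1000000
set_option linter.unusedSectionVars false
set_option linter.unusedVariables false


open Metric Set Filter
open scoped RealInnerProductSpace
open Topology

noncomputable section

variable {H : Type*} [NormedAddCommGroup H] [InnerProductSpace ℝ H] [CompleteSpace H]

lemma aux_ne_top {f : H → EReal} {x u z : H} (hz : f z ≠ ⊤)
    (hu : u ∈ subdiff f x) : f x ≠ ⊤ := by
  intro h
  have h2 := hu z
  rw [h, EReal.top_add_coe] at h2
  exact hz (top_le_iff.mp h2)

lemma aux_real_subgrad {f : H → EReal} (hbot : ∀ x, f x ≠ ⊥) {x p u : H}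
    (hx : f x ≠ ⊤) (hp : f p ≠ ⊤) (hu : u ∈ subdiff f x) :
    (f x).toReal + ⟪u, p - x⟫ ≤ (f p).toReal := by
  have h := hu p
  rw [← EReal.coe_toReal hx (hbot x), ← EReal.coe_toReal hp (hbot p), ← EReal.coe_add,
    EReal.coe_le_coe_iff] at h
  exact h

lemma aux_tangent {r0 : ℝ} {φ φ' : ℝ → ℝ}
    (hφderiv : ∀ s ∈ Ioo (0:ℝ) r0, HasDerivAt φ (φ' s) s)
    (hφconc : ConcaveOn ℝ (Ico 0 r0) φ)
    {a b : ℝ} (ha : a ∈ Ioo (0:ℝ) r0) (hb : b ∈ Ioo (0:ℝ) r0) :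
    φ b - φ a ≤ φ' a * (b - a) := by
  have hline : HasDerivAt (fun h : ℝ => a + h * (b - a)) (b - a) 0 := by
    simpa using ((hasDerivAt_id (0:ℝ)).mul_const (b - a)).const_add a
  have hg : HasDerivAt (fun h : ℝ => φ (a + h * (b - a))) (φ' a * (b - a)) 0 := by
    have h0 : HasDerivAt φ (φ' a) ((fun h : ℝ => a + h * (b - a)) 0) := by
      simpa using hφderiv a ha
    exact h0.comp 0 hline
  have hslope := hasDerivAt_iff_tendsto_slope.mp hg
  have hmono : ∀ᶠ h in 𝓝[>] (0:ℝ),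
      φ b - φ a ≤ slope (fun h : ℝ => φ (a + h * (b - a))) 0 h := by
    filter_upwards [Ioo_mem_nhdsGT_of_mem (by constructor <;> norm_num : (0:ℝ) ∈ Ico (0:ℝ) 1)]
      with h hh
    have hcc := hφconc.2 (show a ∈ Ico (0:ℝ) r0 from ⟨le_of_lt ha.1, ha.2⟩)
      (show b ∈ Ico (0:ℝ) r0 from ⟨le_of_lt hb.1, hb.2⟩)
      (by linarith [hh.2] : (0:ℝ) ≤ 1 - h) (le_of_lt hh.1) (by ring)
    have heq : (1 - h) • a + h • b = a + h * (b - a) := by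
      simp only [smul_eq_mul]; ring
    rw [heq] at hcc
    rw [slope_def_field]
    have h0 : φ (a + 0 * (b - a)) = φ a := by norm_num
    rw [h0, sub_zero, le_div_iff₀ hh.1]
    simp only [smul_eq_mul] at hcc
    nlinarith [hcc]
  have hle : Tendsto (slope (fun h : ℝ => φ (a + h * (b - a))) 0) (𝓝[>] (0:ℝ))
      (𝓝 (φ' a * (b - a))) :=
    hslope.mono_left (nhdsWithin_mono _ (fun x hx => ne_of_gt hx))
  exact ge_of_tendsto hle hmono

lemma aux_deriv_anti {r0 : ℝ} {φ φ' : ℝ → ℝ}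
    (hφderiv : ∀ s ∈ Ioo (0:ℝ) r0, HasDerivAt φ (φ' s) s)
    (hφconc : ConcaveOn ℝ (Ico 0 r0) φ)
    {s t : ℝ} (hs : 0 < s) (hst : s ≤ t) (ht : t < r0) : φ' t ≤ φ' s := by
  rcases eq_or_lt_of_le hst with h | h
  · rw [h]
  · have hsm : s ∈ Ioo (0:ℝ) r0 := ⟨hs, lt_trans h ht⟩
    have htm : t ∈ Ioo (0:ℝ) r0 := ⟨lt_trans hs h, ht⟩
    have h1 := aux_tangent hφderiv hφconc hsm htm
    have h2 := aux_tangent hφderiv hφconc htm hsm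
    nlinarith

lemma prox_step (f : H → EReal) (hbot : ∀ x, f x ≠ ⊥) (hnn : ∀ w, (0:EReal) ≤ f w)
    (hlsc : LowerSemicontinuous f)
    (hconv : ∀ x y : H, ∀ t : ℝ, 0 < t → t < 1 →
      f (t • x + (1 - t) • y) ≤ (t : EReal) * f x + ((1 - t : ℝ) : EReal) * f y)
    (x : H) (hx : f x ≠ ⊤) (c : ℝ) (hc : 0 < c) :
    ∃ y : H, f y ≠ ⊤ ∧ f y ≤ f x ∧ ((2*c) • (x - y)) ∈ subdiff f y := by
  classical
  set S : Set ℝ := {r | ∃ w, f w + ((c * ‖w - x‖^2 : ℝ) : EReal) ≤ (r : EReal)} with hS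
  have hxS : (f x).toReal ∈ S := by
    refine ⟨x, ?_⟩
    rw [EReal.coe_toReal hx (hbot x)]
    simp
  have hg0 : ∀ w : H, (0:EReal) ≤ f w + ((c * ‖w - x‖^2 : ℝ) : EReal) := by
    intro w
    have h2 : (0:ℝ) ≤ c * ‖w - x‖^2 := by positivity
    calc (0:EReal) = 0 + ((0:ℝ) : EReal) := by simp
    _ ≤ f w + ((c * ‖w - x‖^2 : ℝ) : EReal) :=
        add_le_add (hnn w) (by exact_mod_cast h2)
  have hlb : ∀ r ∈ S, (0:ℝ) ≤ r := by
    intro r hr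
    obtain ⟨w, hw⟩ := hr
    have h0 : (0:EReal) ≤ (r:EReal) := le_trans (hg0 w) hw
    exact_mod_cast h0
  have hSbdd : BddBelow S := ⟨0, hlb⟩
  set m := sInf S with hm
  have hmle : ∀ w, (m : EReal) ≤ f w + ((c * ‖w - x‖^2 : ℝ) : EReal) := by
    intro w
    by_contra hcon
    push_neg at hcon
    set g := f w + ((c * ‖w - x‖^2 : ℝ) : EReal) with hgdef
    have hgt : g ≠ ⊤ := ne_top_of_lt hcon
    have hgb : g ≠ ⊥ := (lt_of_lt_of_le (by simp : (⊥:EReal) < 0) (hg0 w)).ne'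
    have hrS : g.toReal ∈ S := ⟨w, by rw [EReal.coe_toReal hgt hgb]⟩
    have h1 : g.toReal < m := by
      rw [← EReal.coe_lt_coe_iff, EReal.coe_toReal hgt hgb]; exact hcon
    linarith [csInf_le hSbdd hrS]
  have hseq : ∀ n : ℕ, ∃ w : H,
      f w + ((c * ‖w - x‖^2 : ℝ) : EReal) ≤ ((m + 1/(n+1) : ℝ) : EReal) := by
    intro n
    have hpos : (0:ℝ) < 1/((n:ℝ)+1) := by positivity
    have hlt : m < m + 1/((n:ℝ)+1) := by linarith
    obtain ⟨r, hrS, hrlt⟩ := exists_lt_of_csInf_lt ⟨_, hxS⟩ hlt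
    obtain ⟨w, hw⟩ := hrS
    exact ⟨w, hw.trans (by exact_mod_cast hrlt.le)⟩
  choose w hw using hseq
  have hwt : ∀ n, f (w n) ≠ ⊤ := by
    intro n h
    have h2 := hw n
    rw [h, EReal.top_add_coe] at h2
    exact EReal.coe_ne_top _ (top_le_iff.mp h2)
  have hwreal : ∀ n, (f (w n)).toReal + c * ‖w n - x‖^2 ≤ m + 1/((n:ℝ)+1) := by
    intro n
    have h2 := hw n
    rw [← EReal.coe_toReal (hwt n) (hbot _), ← EReal.coe_add, EReal.coe_le_coe_iff] at h2
    exact h2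
  have hreal_of : ∀ p : H, f p ≠ ⊤ → m ≤ (f p).toReal + c * ‖p - x‖^2 := by
    intro p hp
    have h2 := hmle p
    rw [← EReal.coe_toReal hp (hbot _), ← EReal.coe_add, EReal.coe_le_coe_iff] at h2
    exact h2
  have hmreal : ∀ n, m ≤ (f (w n)).toReal + c * ‖w n - x‖^2 := fun n => hreal_of _ (hwt n)
  -- midpoint estimate
  have key : ∀ j k : ℕ, c/4 * ‖w j - w k‖^2 ≤ 1/2 * (1/((j:ℝ)+1)) + 1/2 * (1/((k:ℝ)+1)) := by
    intro j k
    set p := (2⁻¹:ℝ) • w j + (1 - 2⁻¹:ℝ) • w k with hpdef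
    have hcv := hconv (w j) (w k) 2⁻¹ (by norm_num) (by norm_num)
    rw [← EReal.coe_toReal (hwt j) (hbot _), ← EReal.coe_toReal (hwt k) (hbot _),
      ← EReal.coe_mul, ← EReal.coe_mul, ← EReal.coe_add] at hcv
    have hpt : f p ≠ ⊤ := ne_top_of_le_ne_top (EReal.coe_ne_top _) hcv
    have hpr : (f p).toReal ≤ 2⁻¹ * (f (w j)).toReal + (1 - 2⁻¹) * (f (w k)).toReal := by
      rw [← EReal.coe_le_coe_iff, EReal.coe_toReal hpt (hbot _)]
      exact hcv
    have hmp := hreal_of p hpt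
    have hab : p - x = (2⁻¹:ℝ) • ((w j - x) + (w k - x)) := by
      rw [hpdef]; module
    have hP : ‖p - x‖ = 2⁻¹ * ‖(w j - x) + (w k - x)‖ := by
      rw [hab, norm_smul]; norm_num
    have hpar := parallelogram_law_with_norm ℝ (w j - x) (w k - x)
    have hsub : (w j - x) - (w k - x) = w j - w k := by abel
    rw [hsub] at hpar
    have hP2 : ‖p - x‖^2 = (2 * ‖w j - x‖^2 + 2 * ‖w k - x‖^2 - ‖w j - w k‖^2)/4 := by
      rw [hP, mul_pow]
      rw [pow_two, pow_two, pow_two, pow_two]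
      nlinarith [hpar]
    rw [hP2] at hmp
    have h1 := hwreal j
    have h2 := hwreal k
    nlinarith [hmp, hpr]
  -- Cauchy sequence
  have hcauchy : CauchySeq w := by
    apply cauchySeq_of_le_tendsto_0 (fun N : ℕ => Real.sqrt (4/c * (1/((N:ℝ)+1))))
    · intro j k N hj hk
      have hj1 : 1/((j:ℝ)+1) ≤ 1/((N:ℝ)+1) := by
        apply one_div_le_one_div_of_le (by positivity)
        have : (N:ℝ) ≤ (j:ℝ) := by exact_mod_cast hj
        linarith
      have hk1 : 1/((k:ℝ)+1) ≤ 1/((N:ℝ)+1) := by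
        apply one_div_le_one_div_of_le (by positivity)
        have : (N:ℝ) ≤ (k:ℝ) := by exact_mod_cast hk
        linarith
      have hkey := key j k
      rw [dist_eq_norm]
      rw [Real.le_sqrt (norm_nonneg _) (by positivity)]
      have hd2 : c/4 * ‖w j - w k‖^2 ≤ 1/((N:ℝ)+1) := by linarith
      have hrw : ‖w j - w k‖^2 = (4/c) * (c/4 * ‖w j - w k‖^2) := by
        field_simp
      rw [hrw]
      apply mul_le_mul_of_nonneg_left hd2 (by positivity)
    · have h : Tendsto (fun N : ℕ => 4/c * (1/((N:ℝ)+1))) atTop (𝓝 0) := by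
        have h2 := tendsto_one_div_add_atTop_nhds_zero_nat (𝕜 := ℝ)
        simpa using h2.const_mul (4/c)
      simpa using h.sqrt
  obtain ⟨y, hy⟩ := cauchySeq_tendsto_of_complete hcauchy
  -- the limit satisfies f y + c‖y-x‖² ≤ m  (real form)
  have hyreal : f y ≠ ⊤ ∧ (f y).toReal + c * ‖y - x‖^2 ≤ m := by
    set e := c * ‖y - x‖^2 with he
    have hmain : f y ≤ ((m - e : ℝ) : EReal) := by
      by_contra hcon
      push_neg at hcon
      -- choose a real q with m - e < q and (q:EReal) < f y
      obtain ⟨q, hq1, hq2⟩ : ∃ q : ℝ, m - e < q ∧ (q : EReal) < f y := by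
        by_cases hyt : f y = ⊤
        · exact ⟨m - e + 1, by linarith, by rw [hyt]; exact EReal.coe_lt_top _⟩
        · have hyb := hbot y
          set Fy := (f y).toReal with hFy
          have hfyeq : f y = (Fy : EReal) := (EReal.coe_toReal hyt hyb).symm
          rw [hfyeq, EReal.coe_lt_coe_iff] at hcon
          refine ⟨(m - e + Fy)/2, by linarith, ?_⟩
          rw [hfyeq, EReal.coe_lt_coe_iff]
          linarith
      set δ := q - (m - e) with hδ
      have hδpos : 0 < δ := by simp only [hδ]; linarith
      have ev1 : ∀ᶠ n in atTop, (q : EReal) < f (w n) := hy.eventually (hlsc y _ hq2)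
      have htend : Tendsto (fun n => c * ‖w n - x‖^2) atTop (𝓝 e) := by
        have h1 : Tendsto (fun n => w n - x) atTop (𝓝 (y - x)) := hy.sub tendsto_const_nhds
        have h2 : Tendsto (fun n => ‖w n - x‖) atTop (𝓝 ‖y - x‖) := h1.norm
        have h3 : Tendsto (fun n => ‖w n - x‖^2) atTop (𝓝 (‖y - x‖^2)) := h2.pow 2
        exact h3.const_mul c
      have ev2 : ∀ᶠ n in atTop, e - δ/2 < c * ‖w n - x‖^2 :=
        htend.eventually (eventually_gt_nhds (by linarith))
      have ev3 : ∀ᶠ n : ℕ in atTop, 1/((n:ℝ)+1) < δ/2 :=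
        tendsto_one_div_add_atTop_nhds_zero_nat.eventually (eventually_lt_nhds (by linarith))
      obtain ⟨n, h1, h2, h3⟩ := (ev1.and (ev2.and ev3)).exists
      have h4 : q < (f (w n)).toReal := by
        rw [← EReal.coe_toReal (hwt n) (hbot _), EReal.coe_lt_coe_iff] at h1
        exact h1
      have h5 := hwreal n
      have h6 : q = m - e + δ := by rw [hδ]; ring
      linarith
    have hyt : f y ≠ ⊤ := ne_top_of_le_ne_top (EReal.coe_ne_top _) hmain
    constructor
    · exact hyt
    · rw [← EReal.coe_toReal hyt (hbot y), EReal.coe_le_coe_iff] at hmain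
      linarith
  obtain ⟨hyt, hym⟩ := hyreal
  have hFy0 : (0:ℝ) ≤ (f y).toReal := by
    have := hnn y
    rw [← EReal.coe_toReal hyt (hbot y)] at this
    exact_mod_cast this
  refine ⟨y, hyt, ?_, ?_⟩
  · -- f y ≤ f x
    have h1 : f y ≤ (m : EReal) := by
      rw [← EReal.coe_toReal hyt (hbot y), EReal.coe_le_coe_iff]
      nlinarith [hym, sq_nonneg ‖y - x‖, hc.le, norm_nonneg (y - x)]
    have h2 : (m : EReal) ≤ f x := by
      have := hmle x
      simpa using this
    exact h1.trans h2
  · -- subgradient membership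
    intro p
    by_cases hp : f p = ⊤
    · rw [hp]; exact le_top
    have hr : ∀ t : ℝ, 0 < t → t < 1 →
        (f y).toReal ≤ (f p).toReal + 2*c*⟪y - x, p - y⟫ + c*t*‖p - y‖^2 := by
      intro t ht0 ht1
      have hcv := hconv p y t ht0 ht1
      set q := t • p + (1 - t) • y with hqdef
      rw [← EReal.coe_toReal hp (hbot _), ← EReal.coe_toReal hyt (hbot _),
        ← EReal.coe_mul, ← EReal.coe_mul, ← EReal.coe_add] at hcv
      have hqt : f q ≠ ⊤ := ne_top_of_le_ne_top (EReal.coe_ne_top _) hcv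
      have hqr : (f q).toReal ≤ t * (f p).toReal + (1 - t) * (f y).toReal := by
        rw [← EReal.coe_le_coe_iff, EReal.coe_toReal hqt (hbot _)]
        exact hcv
      have hmq := hreal_of q hqt
      have hqx : q - x = (y - x) + t • (p - y) := by rw [hqdef]; module
      have hnsm : ‖t • (p - y)‖^2 = t^2 * ‖p - y‖^2 := by
        rw [norm_smul]; simp [mul_pow, sq_abs]
      have hnq : ‖q - x‖^2 = ‖y - x‖^2 + 2*t*⟪y - x, p - y⟫ + t^2*‖p - y‖^2 := by
        rw [hqx, norm_add_sq_real, real_inner_smul_right, hnsm]; ring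
      rw [hnq] at hmq
      -- m ≤ tFp + (1-t)Fy + c(...)  and  Fy + c‖y-x‖² ≤ m
      have hstep : t * (f y).toReal ≤ t * ((f p).toReal + 2*c*⟪y - x, p - y⟫ + c*t*‖p - y‖^2) := by
        nlinarith [hmq, hqr, hym]
      exact le_of_mul_le_mul_left hstep ht0
    have hfinal : (f y).toReal ≤ (f p).toReal + 2*c*⟪y - x, p - y⟫ := by
      by_contra hlt
      push_neg at hlt
      obtain ⟨ε, hε, hεpos⟩ : ∃ ε : ℝ,
          ε = (f y).toReal - ((f p).toReal + 2*c*⟪y - x, p - y⟫) ∧ 0 < ε :=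
        ⟨_, rfl, by linarith⟩
      obtain ⟨K, hK, hK0⟩ : ∃ K : ℝ, K = c * ‖p - y‖^2 ∧ 0 ≤ K := ⟨_, rfl, by positivity⟩
      obtain ⟨t, ht0, ht1, htK⟩ : ∃ t : ℝ, 0 < t ∧ t < 1 ∧ t*(K+1) ≤ ε := by
        refine ⟨min (1/2) (ε/(K+1)), lt_min (by norm_num) (by positivity),
          lt_of_le_of_lt (min_le_left _ _) (by norm_num), ?_⟩
        have h2 : min (1/2 : ℝ) (ε/(K+1)) ≤ ε / (K + 1) := min_le_right _ _
        rw [le_div_iff₀ (by linarith)] at h2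
        exact h2
      have h3 := hr t ht0 ht1
      have h5 : c*t*‖p - y‖^2 = t * K := by rw [hK]; ring
      have h4 : c*t*‖p - y‖^2 < ε := by nlinarith
      rw [hε] at h4
      linarith
    -- convert back to EReal
    have hinner : ⟪(2*c) • (x - y), p - y⟫ = -(2*c*⟪y - x, p - y⟫) := by
      rw [real_inner_smul_left, show x - y = -(y - x) by abel, inner_neg_left]
      ring
    rw [← EReal.coe_toReal hyt (hbot _), ← EReal.coe_toReal hp (hbot _), ← EReal.coe_add,
      EReal.coe_le_coe_iff, hinner]
    linarith

lemma descent (f : H → EReal) (hbot : ∀ x, f x ≠ ⊥) (hnn : ∀ w, (0:EReal) ≤ f w)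
    (hlsc : LowerSemicontinuous f)
    (hconv : ∀ x y : H, ∀ t : ℝ, 0 < t → t < 1 →
      f (t • x + (1 - t) • y) ≤ (t : EReal) * f x + ((1 - t : ℝ) : EReal) * f y)
    (z : H) (hz : f z = 0)
    (r0 r1 : ℝ) (hr1 : 0 < r1) (hr1r0 : r1 < r0)
    (u : H) (hu0 : u ≠ 0) (c : ℝ) (hcdef : c = ‖u‖^2 / (r0 - r1)) :
    ∀ n : ℕ, ∀ y v, v ∈ subdiff f y → ‖v‖ ≤ ‖u‖ → f y ≠ ⊤ → r1 ≤ (f y).toReal →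
      ‖y - z‖^2 ≤ n * (r1 / c) →
      ∃ y' v', v' ∈ subdiff f y' ∧ ‖v'‖ ≤ ‖u‖ ∧ f y' ≠ ⊤ ∧
        r1 ≤ (f y').toReal ∧ (f y').toReal < r0 := by
  have hu2 : 0 < ‖u‖^2 := by
    have : 0 < ‖u‖ := norm_pos_iff.mpr hu0
    positivity
  have hc : 0 < c := by rw [hcdef]; exact div_pos hu2 (by linarith)
  have h2c : ‖u‖^2 / (2*c) = (r0 - r1)/2 := by
    rw [hcdef]; field_simp
  intro n
  induction n with
  | zero =>
    intro y v hv hvu hyt hyr hyz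
    exfalso
    have hy0 : ‖y - z‖^2 ≤ 0 := by simpa using hyz
    have : y = z := by
      have h1 : ‖y - z‖ = 0 := by nlinarith [norm_nonneg (y - z)]
      have := norm_eq_zero.mp h1
      exact sub_eq_zero.mp this
    rw [this, hz] at hyr
    simp at hyr
    linarith
  | succ n ih =>
    intro y v hv hvu hyt hyr hyz
    by_cases hcase : (f y).toReal < r0
    · exact ⟨y, v, hv, hvu, hyt, hyr, hcase⟩
    push_neg at hcase
    obtain ⟨y', hy't, hy'le, hv'⟩ := prox_step f hbot hnn hlsc hconv y hyt c hc
    have hzt : f z ≠ ⊤ := by rw [hz]; exact EReal.zero_ne_top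
    have h1 := aux_real_subgrad hbot hyt hy't hv
    have h2 := aux_real_subgrad hbot hy't hyt hv'
    have h3 := aux_real_subgrad hbot hy't hzt hv'
    rw [hz] at h3
    simp only [EReal.toReal_zero] at h3
    -- norms and inner products
    have hnv' : ‖(2*c) • (y - y')‖ = 2*c*‖y - y'‖ := by
      rw [norm_smul, Real.norm_eq_abs, abs_of_pos (by linarith : (0:ℝ) < 2*c)]
    have hiv' : ⟪(2*c) • (y - y'), y - y'⟫ = 2*c*‖y - y'‖^2 := by
      rw [real_inner_smul_left, real_inner_self_eq_norm_sq]
    -- (a) ‖v'‖ ≤ ‖v‖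
    have hCS : ⟪v, y - y'⟫ ≤ ‖v‖ * ‖y - y'‖ := real_inner_le_norm v (y - y')
    have hsum : 2*c*‖y - y'‖^2 ≤ ⟪v, y - y'⟫ := by
      have e1 : ⟪v, y' - y⟫ = -⟪v, y - y'⟫ := by
        rw [show y' - y = -(y - y') by abel, inner_neg_right]
      have e2 : ⟪(2*c) • (y - y'), y - y'⟫ = 2*c*‖y - y'‖^2 := hiv'
      linarith [h1, h2, e1, e2]
    have ha : ‖(2*c) • (y - y')‖ ≤ ‖v‖ := by
      by_cases hyy : y = y'
      · simp [hyy, norm_nonneg]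
      · have hpos : 0 < ‖y - y'‖ := norm_pos_iff.mpr (sub_ne_zero.mpr hyy)
        rw [hnv']
        nlinarith [hsum, hCS]
    have hau : ‖(2*c) • (y - y')‖ ≤ ‖u‖ := le_trans ha hvu
    -- (b) r1 ≤ F y'
    have hyy'le : ‖y - y'‖ ≤ ‖u‖/(2*c) := by
      rw [hnv'] at hau
      rw [le_div_iff₀ (by linarith : (0:ℝ) < 2*c)]
      linarith [hau]
    have hb : r1 ≤ (f y').toReal := by
      have e1 : ⟪v, y' - y⟫ ≥ -(‖v‖ * ‖y - y'‖) := by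
        have := real_inner_le_norm v (y - y')
        have e2 : ⟪v, y' - y⟫ = -⟪v, y - y'⟫ := by
          rw [show y' - y = -(y - y') by abel, inner_neg_right]
        linarith
      have e3 : ‖v‖ * ‖y - y'‖ ≤ ‖u‖ * (‖u‖/(2*c)) := by
        apply mul_le_mul hvu hyy'le (norm_nonneg _) (norm_nonneg _)
      have e4 : ‖u‖ * (‖u‖/(2*c)) = (r0 - r1)/2 := by
        rw [← h2c]; ring
      linarith [h1, e1, e3, hcase]
    -- (c) descent bound and recursion
    have hid : ‖y - z‖^2 = ‖y - y'‖^2 + 2*⟪y - y', y' - z⟫ + ‖y' - z‖^2 := by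
      rw [show y - z = (y - y') + (y' - z) by abel, norm_add_sq_real]
    have hiz : ⟪(2*c) • (y - y'), z - y'⟫ = -(2*c*⟪y - y', y' - z⟫) := by
      rw [real_inner_smul_left, show z - y' = -(y' - z) by abel, inner_neg_right]
      ring
    have hc3 : r1 ≤ 2*c*⟪y - y', y' - z⟫ := by
      rw [hiz] at h3
      linarith [h3, hb]
    have hrec : ‖y' - z‖^2 ≤ n * (r1/c) := by
      have hd : r1/c ≤ 2*⟪y - y', y' - z⟫ := by
        rw [div_le_iff₀ hc]
        linarith [hc3]
      have hsq : 0 ≤ ‖y - y'‖^2 := sq_nonneg _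
      have hcast : ((n:ℝ)+1) * (r1/c) = n * (r1/c) + r1/c := by ring
      have hyz' : ‖y - z‖^2 ≤ ((n:ℝ)+1) * (r1/c) := by
        have : ((n+1 : ℕ) : ℝ) = (n:ℝ)+1 := by push_cast; ring
        rw [← this]
        exact hyz
      linarith [hid, hd, hsq, hyz', hcast]
    exact ih y' ((2*c) • (y - y')) hv' hau hy't hb hrec


/-- **Proposition 6.3** (globalization of the KL inequality, convex case): if
`f` is proper lsc convex with `min f = 0`, `argmin f ≠ ∅`, `φ ∈ 𝒦(0,r₀)`
desingularizes `f` on `[0 < f < r₀]` and `0 < r₁ < r₀`, then the function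
`φ̂(r) = φ(r)` for `r ≤ r₁` and `φ̂(r) = φ(r₁) + (r − r₁)φ'(r₁)` for `r ≥ r₁`
is desingularizing for `f` on all of `H`: `φ̂'(f(x))·‖∂⁰f(x)‖ ≥ 1` whenever
`f(x) > 0` (with `φ̂'(r) = φ'(r₁)` for `r ≥ r₁`; the KL inequality with
`‖∂⁰f(x)‖ = dist(0,∂f(x)) ∈ [0,∞]` is expressed via all `u ∈ ∂f(x)`). -/
theorem stmt17 (f : H → EReal)
    (hbot : ∀ x, f x ≠ ⊥) (htop : ∃ x, f x ≠ ⊤)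
    (hlsc : LowerSemicontinuous f)
    (hconv : ∀ x y : H, ∀ t : ℝ, 0 < t → t < 1 →
      f (t • x + (1 - t) • y) ≤ (t : EReal) * f x + ((1 - t : ℝ) : EReal) * f y)
    (hmin : ∃ z, z ∈ argminSet f ∧ f z = 0)
    (r0 r1 : ℝ) (hr0 : 0 < r0) (hr1 : 0 < r1) (hr1r0 : r1 < r0)
    (φ φ' : ℝ → ℝ)
    (hφcont : ContinuousOn φ (Ico 0 r0))
    (hφderiv : ∀ s ∈ Ioo (0 : ℝ) r0, HasDerivAt φ (φ' s) s)
    (hφ'cont : ContinuousOn φ' (Ioo 0 r0))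
    (hφconc : ConcaveOn ℝ (Ico 0 r0) φ)
    (hφ0 : φ 0 = 0)
    (hφ'pos : ∀ s ∈ Ioo (0 : ℝ) r0, 0 < φ' s)
    (hKL : ∀ x, 0 < f x → f x < (r0 : EReal) →
      ∀ u ∈ subdiff f x, 1 ≤ φ' ((f x).toReal) * ‖u‖)
    (φhat φhat' : ℝ → ℝ)
    (hφhat : ∀ r, φhat r = if r ≤ r1 then φ r else φ r1 + (r - r1) * φ' r1)
    (hφhat' : ∀ r, φhat' r = if r ≤ r1 then φ' r else φ' r1) :
    ∀ x, 0 < f x → ∀ u ∈ subdiff f x, 1 ≤ φhat' ((f x).toReal) * ‖u‖ := by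
  obtain ⟨z, hzmin, hz0⟩ := hmin
  have hnn : ∀ w, (0:EReal) ≤ f w := fun w => hz0 ▸ hzmin w
  intro x hfx u hu
  have hzt : f z ≠ ⊤ := by rw [hz0]; exact EReal.zero_ne_top
  have hxt : f x ≠ ⊤ := aux_ne_top hzt hu
  have hxeq : f x = (((f x).toReal : ℝ) : EReal) := (EReal.coe_toReal hxt (hbot x)).symm
  have hfxR : 0 < (f x).toReal := by
    rw [hxeq] at hfx
    exact_mod_cast hfx
  have hu0 : u ≠ 0 := by
    intro h
    have h2 := hu z
    rw [h, hz0] at h2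
    simp only [inner_zero_left, EReal.coe_zero, add_zero] at h2
    exact absurd (lt_of_lt_of_le hfx h2) (lt_irrefl _)
  by_cases hcase : (f x).toReal ≤ r1
  · rw [hφhat' ((f x).toReal), if_pos hcase]
    apply hKL x hfx ?_ u hu
    rw [hxeq]
    exact_mod_cast lt_of_le_of_lt hcase hr1r0
  · push_neg at hcase
    rw [hφhat' ((f x).toReal), if_neg (not_le.mpr hcase)]
    have hun : 0 < ‖u‖ := norm_pos_iff.mpr hu0
    have hc : 0 < ‖u‖^2 / (r0 - r1) := div_pos (by positivity) (by linarith)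
    obtain ⟨n, hn⟩ := exists_nat_ge (‖x - z‖^2 / (r1 / (‖u‖^2 / (r0 - r1))))
    have hr1c : 0 < r1 / (‖u‖^2 / (r0 - r1)) := div_pos hr1 hc
    have hbound : ‖x - z‖^2 ≤ n * (r1 / (‖u‖^2 / (r0 - r1))) := by
      rw [div_le_iff₀ hr1c] at hn
      linarith
    obtain ⟨y, v, hv, hvu, hyt, hyr1, hyr0⟩ :=
      descent f hbot hnn hlsc hconv z hz0 r0 r1 hr1 hr1r0 u hu0 _ rfl n x u hu le_rfl hxt
        hcase.le hbound
    have hyeq : f y = (((f y).toReal : ℝ) : EReal) := (EReal.coe_toReal hyt (hbot y)).symm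
    have hy1 : 0 < f y := by
      rw [hyeq]
      exact_mod_cast lt_of_lt_of_le hr1 hyr1
    have hy2 : f y < (r0 : EReal) := by
      rw [hyeq]
      exact_mod_cast hyr0
    have hKLy := hKL y hy1 hy2 v hv
    have hanti : φ' ((f y).toReal) ≤ φ' r1 :=
      aux_deriv_anti hφderiv hφconc hr1 hyr1 hyr0
    have hpos : 0 < φ' ((f y).toReal) :=
      hφ'pos _ ⟨lt_of_lt_of_le hr1 hyr1, hyr0⟩
    calc (1:ℝ) ≤ φ' ((f y).toReal) * ‖v‖ := hKLy
    _ ≤ φ' r1 * ‖v‖ := mul_le_mul_of_nonneg_right hanti (norm_nonneg _)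
    _ ≤ φ' r1 * ‖u‖ := by
        apply mul_le_mul_of_nonneg_left hvu
        linarith [hφ'pos r1 ⟨hr1, hr1r0⟩]
end
end

section
/- Hölderian error bounds do not imply the KL inequality without convexity: let r ≥ 2 be an integer and define f : ℝ → ℝ by f(x) = x^{2r}·(2 + cos(1/x)) for x ≠ 0 and f(0) = 0. Then: (a) f is differentiable on ℝ with f′(0) = 0; (b) f(x) ≥ x^{2r} for all x ∈ ℝ (so f satisfies the Hölderian error bound f(x) ≥ dist(x, argmin f)^{2r} with argmin f = {0}); and (c) there exists a sequence (x_k) of strictly positive real numbers converging to 0 such that f′(x_k) = 0 for all k (so f has positive critical values accumulating at 0 and cannot satisfy the KL inequality at 0). -/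
open Metric Set Filter

noncomputable section

private lemma stmt19_ratio_lt (r k : ℕ) (hk : r ≤ k) :
    ((2*(k:ℝ)+2)/(2*k+1)) ^ (2*r) < 3 := by
  have h1 : (0:ℝ) < 2*k+1 := by positivity
  have ht : (2*(k:ℝ)+2)/(2*k+1) = 1 + 1/(2*k+1) := by field_simp; ring
  have hle : (1 + 1/(2*(k:ℝ)+1)) ≤ Real.exp (1/(2*k+1)) := by
    have := Real.add_one_le_exp (1/(2*(k:ℝ)+1)); linarith
  calc ((2*(k:ℝ)+2)/(2*k+1)) ^ (2*r) ≤ (Real.exp (1/(2*k+1)))^(2*r) := by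
        rw [ht]; exact pow_le_pow_left₀ (by positivity) hle _
    _ = Real.exp ((2*(r:ℝ)) * (1/(2*k+1))) := by rw [← Real.exp_nat_mul]; push_cast; ring_nf
    _ < Real.exp 1 := by
        apply Real.exp_lt_exp.mpr
        rw [mul_one_div, div_lt_one h1]
        have : (r:ℝ) ≤ k := by exact_mod_cast hk
        linarith
    _ < 3 := by linarith [Real.exp_one_lt_d9]


/-- **Hölderian error bounds do not imply the KL inequality without
convexity**: for an integer `r ≥ 2`, the function
`f(x) = x^{2r}·(2 + cos(1/x))` for `x ≠ 0`, `f(0) = 0` (note that in Lean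
`0⁻¹ = 0`, so the single formula below defines exactly this function, since
`0^{2r}·(2 + cos 0) = 0`), satisfies:
(a) `f` is differentiable on `ℝ` with `f'(0) = 0`;
(b) `f(x) ≥ x^{2r}` for all `x`, and `argmin f = {0}` (so `f` satisfies the
Hölderian error bound `f(x) ≥ dist(x, argmin f)^{2r}`); and
(c) there is a sequence of strictly positive critical points of `f` converging
to `0` (so `f` has positive critical values accumulating at `0` and cannot
satisfy the KL inequality at `0`). -/
theorem stmt19 (r : ℕ) (hr : 2 ≤ r) (f : ℝ → ℝ)
    (hf : ∀ x : ℝ, f x = x ^ (2 * r) * (2 + Real.cos x⁻¹)) :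
    (Differentiable ℝ f ∧ deriv f 0 = 0) ∧
    ((∀ x : ℝ, x ^ (2 * r) ≤ f x) ∧ {x : ℝ | ∀ y, f x ≤ f y} = {0}) ∧
    ∃ x : ℕ → ℝ, (∀ k, 0 < x k) ∧ Tendsto x atTop (nhds 0) ∧
      ∀ k, deriv f (x k) = 0 := by
  have hf0 : f 0 = 0 := by
    rw [hf, zero_pow (by omega), zero_mul]
  -- pointwise bound
  have hbound : ∀ x : ℝ, |f x| ≤ 3 * |x| ^ (2*r) := by
    intro x
    rw [hf, abs_mul, abs_pow]
    have h1 : |2 + Real.cos x⁻¹| ≤ 3 := by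
      have h2 := Real.neg_one_le_cos x⁻¹
      have h3 := Real.cos_le_one x⁻¹
      rw [abs_le]; constructor <;> linarith
    have := mul_le_mul_of_nonneg_left h1 (pow_nonneg (abs_nonneg x) (2*r))
    linarith
  -- differentiability away from 0
  have hdiffne : ∀ x : ℝ, x ≠ 0 → DifferentiableAt ℝ f x := by
    intro x hx
    have hfun : f = fun y : ℝ => y ^ (2 * r) * (2 + Real.cos y⁻¹) := funext hf
    rw [hfun]
    apply DifferentiableAt.mul (differentiableAt_pow _)
    apply DifferentiableAt.const_add
    exact Real.differentiable_cos.differentiableAt.comp x (differentiableAt_inv hx)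
  -- derivative at 0
  have hd0 : HasDerivAt f 0 0 := by
    rw [hasDerivAt_iff_tendsto_slope]
    apply squeeze_zero_norm' (a := fun x : ℝ => 3 * |x|)
    · have h1 : ∀ᶠ x : ℝ in nhds 0, |x| < 1 := by
        have := Metric.ball_mem_nhds (0:ℝ) one_pos
        filter_upwards [this] with x hx
        simpa [Real.dist_eq] using hx
      filter_upwards [self_mem_nhdsWithin,
        eventually_nhdsWithin_of_eventually_nhds h1] with x hx h1x
      have hxne : x ≠ 0 := hx
      have hxpos : (0:ℝ) < |x| := abs_pos.mpr hxne
      have hs : slope f 0 x = f x / x := by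
        simp [slope_def_field, hf0]
      rw [hs, Real.norm_eq_abs, abs_div]
      rw [div_le_iff₀ hxpos]
      calc |f x| ≤ 3 * |x| ^ (2*r) := hbound x
        _ ≤ 3 * (|x| * |x|) := by
            have : |x| ^ (2*r) ≤ |x| ^ 2 := pow_le_pow_of_le_one (abs_nonneg x) h1x.le (by omega)
            nlinarith
        _ = 3 * |x| * |x| := by ring
    · have : Filter.Tendsto (fun x : ℝ => 3 * |x|) (nhds 0) (nhds (3 * |(0:ℝ)|)) :=
        (continuous_abs.tendsto 0).const_mul 3
      simpa using this.mono_left nhdsWithin_le_nhds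
  have hdiff : Differentiable ℝ f := by
    intro x
    by_cases hx : x = 0
    · subst hx; exact hd0.differentiableAt
    · exact hdiffne x hx
  -- part (b)
  have hlb : ∀ x : ℝ, x ^ (2*r) ≤ f x := by
    intro x
    rw [hf]
    have h1 : (1:ℝ) ≤ 2 + Real.cos x⁻¹ := by
      have := Real.neg_one_le_cos x⁻¹; linarith
    have h2 : (0:ℝ) ≤ x ^ (2*r) := (even_two_mul r).pow_nonneg x
    nlinarith
  have hargmin : {x : ℝ | ∀ y, f x ≤ f y} = {0} := by
    ext x
    simp only [Set.mem_setOf_eq, Set.mem_singleton_iff]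
    constructor
    · intro h
      have h1 := h 0
      rw [hf0] at h1
      have h2 : x ^ (2*r) ≤ 0 := le_trans (hlb x) h1
      have h3 : (0:ℝ) ≤ x ^ (2*r) := (even_two_mul r).pow_nonneg x
      have : x ^ (2*r) = 0 := le_antisymm h2 h3
      exact pow_eq_zero_iff (by omega) |>.mp this
    · rintro rfl y
      rw [hf0]
      exact le_trans ((even_two_mul r).pow_nonneg y) (hlb y)
  -- part (c): critical points
  have hπ := Real.pi_pos
  have key : ∀ n : ℕ, ∃ x : ℝ, 0 < x ∧ x < ((n:ℝ)+1)⁻¹ ∧ deriv f x = 0 := by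
    intro n
    set k := n + r + 1 with hk
    set A := ((2*(k:ℝ)+2)*Real.pi)⁻¹ with hA
    set M := ((2*(k:ℝ)+1)*Real.pi)⁻¹ with hM
    set B := ((2*(k:ℝ))*Real.pi)⁻¹ with hB
    have hkpos : (0:ℝ) < k := by positivity
    have hApos : 0 < A := by rw [hA]; positivity
    have hMpos : 0 < M := by rw [hM]; positivity
    have hBpos : 0 < B := by rw [hB]; positivity
    have hAM : A < M := by
      rw [hA, hM]
      apply inv_strictAnti₀ (by positivity)
      nlinarith
    have hMB : M < B := by
      rw [hM, hB]
      apply inv_strictAnti₀ (by positivity)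
      nlinarith
    have hAB : A < B := hAM.trans hMB
    -- values at the three points
    have hfA : f A = 3 * A ^ (2*r) := by
      rw [hf, hA, inv_inv]
      have : Real.cos ((2*(k:ℝ)+2)*Real.pi) = 1 := by
        have h := Real.cos_nat_mul_two_pi (k+1)
        rw [← h]; push_cast; ring_nf
      rw [this]; ring
    have hfM : f M = M ^ (2*r) := by
      rw [hf, hM, inv_inv]
      have : Real.cos ((2*(k:ℝ)+1)*Real.pi) = -1 := by
        have h := Real.cos_nat_mul_two_pi_add_pi k
        rw [← h]; push_cast; ring_nf
      rw [this]; ring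
    have hfB : f B = 3 * B ^ (2*r) := by
      rw [hf, hB, inv_inv]
      have : Real.cos ((2*(k:ℝ))*Real.pi) = 1 := by
        have h := Real.cos_nat_mul_two_pi k
        rw [← h]; push_cast; ring_nf
      rw [this]; ring
    -- key inequality : M^(2r) < 3 A^(2r)
    have hMA3 : M ^ (2*r) < 3 * A ^ (2*r) := by
      have hratio := stmt19_ratio_lt r k (by omega)
      have hdiv : M / A = (2*(k:ℝ)+2)/(2*k+1) := by
        rw [hM, hA]
        field_simp
      have hMeq : M ^ (2*r) = (M/A) ^ (2*r) * A ^ (2*r) := by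
        rw [div_pow, div_mul_cancel₀]
        positivity
      rw [hMeq, hdiv]
      exact mul_lt_mul_of_pos_right hratio (by positivity)
    have hMB3 : M ^ (2*r) < 3 * B ^ (2*r) := by
      have : M ^ (2*r) < B ^ (2*r) := pow_lt_pow_left₀ hMB hMpos.le (by omega)
      nlinarith [pow_pos hBpos (2*r)]
    -- minimum on [A, B]
    obtain ⟨x₀, hx₀mem, hx₀min⟩ :=
      isCompact_Icc.exists_isMinOn (Set.nonempty_Icc.mpr hAB.le)
        (hdiff.continuous.continuousOn (s := Set.Icc A B))
    have hMmem : M ∈ Set.Icc A B := ⟨hAM.le, hMB.le⟩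
    have hx₀M : f x₀ ≤ f M := hx₀min hMmem
    have hx₀A : x₀ ≠ A := by
      intro h
      rw [h] at hx₀M
      rw [hfA, hfM] at hx₀M
      linarith
    have hx₀B : x₀ ≠ B := by
      intro h
      rw [h] at hx₀M
      rw [hfB, hfM] at hx₀M
      linarith
    have hx₀Ioo : x₀ ∈ Set.Ioo A B :=
      ⟨lt_of_le_of_ne hx₀mem.1 (Ne.symm hx₀A), lt_of_le_of_ne hx₀mem.2 hx₀B⟩
    have hloc : IsLocalMin f x₀ :=
      hx₀min.isLocalMin (Icc_mem_nhds hx₀Ioo.1 hx₀Ioo.2)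
    refine ⟨x₀, hApos.trans hx₀Ioo.1, ?_, hloc.deriv_eq_zero⟩
    have hBlt : B < ((n:ℝ)+1)⁻¹ := by
      rw [hB]
      apply inv_strictAnti₀ (by positivity)
      have hk3 : (n:ℝ) + 3 ≤ (k:ℝ) := by
        rw [hk]; push_cast; have : (2:ℝ) ≤ r := by exact_mod_cast hr
        linarith
      nlinarith [Real.pi_gt_three]
    exact hx₀Ioo.2.trans hBlt
  choose x hx1 hx2 hx3 using key
  refine ⟨⟨hdiff, hd0.deriv⟩, ⟨hlb, hargmin⟩, x, hx1, ?_, hx3⟩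
  have ht : Filter.Tendsto (fun n : ℕ => ((n:ℝ)+1)⁻¹) atTop (nhds 0) := by
    simpa [one_div] using tendsto_one_div_add_atTop_nhds_zero_nat (𝕜 := ℝ)
  exact tendsto_of_tendsto_of_tendsto_of_le_of_le tendsto_const_nhds ht
    (fun n => (hx1 n).le) (fun n => (hx2 n).le)
end
end
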